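/- arXiv:1904.10155 — 8 statements merged into one kernel-verified Lean document; each statement's English description precedes it below -/
import Mathlib

section
/- Let d, m, k be positive integers with m ≤ k ≤ d and let A ∈ ℝ^{d×d} be a symmetric positive semidefinite matrix with rank(A) ≤ m. Then the maximum of Tr(Wᵀ A W) over the FSPCA feasible set F(d,m,k) is attained and equals the sum of the k largest diagonal entries of A. -/
open Matrix

/-- The FSPCA feasible set: `Wᵀ W = I_m` and `W` has at most `k` nonzero rows. -/
def feasible (d m k : ℕ) (W : Matrix (Fin d) (Fin m) ℝ) : Prop :=
  Wᵀ * W = 1 ∧ {i | W i ≠ 0}.ncard ≤ k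

section Aux
open Module Submodule

lemma exists_superset_finrank {K V : Type*} [Field K] [AddCommGroup V] [Module K V]
    [FiniteDimensional K V] :
    ∀ (n : ℕ) (S : Submodule K V), finrank K S + n ≤ finrank K V →
      ∃ T : Submodule K V, S ≤ T ∧ finrank K T = finrank K S + n := by
  intro n
  induction n with
  | zero => exact fun S _ => ⟨S, le_rfl, by omega⟩
  | succ n ih =>
    intro S h
    have hlt : finrank K S < finrank K V := by omega
    obtain ⟨x, hx⟩ := S.exists_of_finrank_lt hlt
    have hxS : x ∉ S := by simpa using hx 1 one_ne_zero
    have hx0 : x ≠ 0 := fun h0 => hxS (h0 ▸ S.zero_mem)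
    have hdis : S ⊓ (K ∙ x) = ⊥ :=
      ((Submodule.disjoint_span_singleton' hx0).mpr hxS).eq_bot
    have hfr : finrank K ↥(S ⊔ (K ∙ x)) = finrank K S + 1 := by
      have h2 := Submodule.finrank_sup_add_finrank_inf_eq S (K ∙ x)
      rw [hdis, finrank_bot, finrank_span_singleton hx0] at h2
      omega
    obtain ⟨T, hT1, hT2⟩ := ih (S ⊔ (K ∙ x)) (by omega)
    exact ⟨T, le_trans le_sup_left hT1, by omega⟩

lemma exists_between_finrank {K V : Type*} [Field K] [AddCommGroup V] [Module K V]
    [FiniteDimensional K V] (S U : Submodule K V) (hSU : S ≤ U) (m : ℕ)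
    (h1 : finrank K S ≤ m) (h2 : m ≤ finrank K U) :
    ∃ T, S ≤ T ∧ T ≤ U ∧ finrank K T = m := by
  set S' : Submodule K U := S.comap U.subtype with hS'
  have hfrS' : finrank K S' = finrank K S :=
    (Submodule.comapSubtypeEquivOfLe hSU).finrank_eq
  obtain ⟨T', hT'1, hT'2⟩ := exists_superset_finrank (m - finrank K S) S' (by omega)
  refine ⟨T'.map U.subtype, ?_, ?_, ?_⟩
  · intro y hy
    have : y ∈ S'.map U.subtype := by
      rw [hS', Submodule.map_comap_subtype, inf_eq_right.mpr hSU]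
      exact hy
    exact Submodule.map_mono hT'1 this
  · exact Submodule.map_subtype_le U T'
  · rw [Submodule.finrank_map_subtype_eq]
    omega

lemma trace_mul_nonneg {n : Type*} [Fintype n] [DecidableEq n] {A B : Matrix n n ℝ}
    (hA : A.PosSemidef) (hB : B.PosSemidef) : 0 ≤ (A * B).trace := by
  obtain ⟨C, rfl⟩ : ∃ C : Matrix n n ℝ, A = Cᴴ * C := by
    open scoped MatrixOrder in
    obtain ⟨X, hX, -, hXX⟩ := CFC.exists_sqrt_of_isSelfAdjoint_of_quasispectrumRestricts
      hA.isHermitian (QuasispectrumRestricts.nnreal_of_nonneg hA.nonneg)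
    exact ⟨X, by rw [← hXX]; congr 1; exact hX.star_eq.symm⟩
  rw [Matrix.mul_assoc, Matrix.trace_mul_comm]
  have : (C * B * Cᴴ).PosSemidef := hB.mul_mul_conjTranspose_same C
  rw [Matrix.trace]
  apply Finset.sum_nonneg
  intro i _
  have h := this.dotProduct_mulVec_nonneg (Pi.single i 1)
  simpa [Matrix.diag, Matrix.mulVec_single, dotProduct, Pi.single_apply] using h

noncomputable def indD {d : ℕ} (I : Finset (Fin d)) : Matrix (Fin d) (Fin d) ℝ :=
  Matrix.diagonal (fun i => if i ∈ I then (1:ℝ) else 0)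

def coordSub {d : ℕ} (I : Finset (Fin d)) : Submodule ℝ (EuclideanSpace ℝ (Fin d)) where
  carrier := {x | ∀ i ∉ I, x i = 0}
  add_mem' := by
    intro a b ha hb i hi
    have h : (a + b) i = a i + b i := rfl
    rw [h, ha i hi, hb i hi, add_zero]
  zero_mem' := fun i _ => rfl
  smul_mem' := by
    intro c a ha i hi
    have h : (c • a) i = c * a i := rfl
    rw [h, ha i hi, mul_zero]

lemma mem_coordSub {d : ℕ} {I : Finset (Fin d)} {x : EuclideanSpace ℝ (Fin d)} :
    x ∈ coordSub I ↔ ∀ i ∉ I, x i = 0 := Iff.rfl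

lemma le_finrank_coordSub {d : ℕ} (I : Finset (Fin d)) :
    I.card ≤ finrank ℝ (coordSub I) := by
  classical
  have horth : Orthonormal ℝ (fun i : I => EuclideanSpace.single (i : Fin d) (1:ℝ)) :=
    (EuclideanSpace.orthonormal_single (𝕜 := ℝ) (ι := Fin d)).comp _ Subtype.val_injective
  have hli := horth.linearIndependent
  have hsp : Submodule.span ℝ
      (Set.range fun i : I => EuclideanSpace.single (i : Fin d) (1:ℝ)) ≤ coordSub I := by
    rw [Submodule.span_le]
    rintro _ ⟨i, rfl⟩ j hj
    have hne : j ≠ (i : Fin d) := fun h => hj (h ▸ i.2)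
    show EuclideanSpace.single (i : Fin d) (1:ℝ) j = 0
    simp [EuclideanSpace.single_apply, hne]
  have hmono := Submodule.finrank_mono hsp
  rwa [finrank_span_eq_card hli, Fintype.card_coe] at hmono

lemma indD_mul_eq_self {d m : ℕ} {I : Finset (Fin d)} {W : Matrix (Fin d) (Fin m) ℝ}
    (hWrow : ∀ i ∉ I, W i = 0) : indD I * W = W := by
  ext i a
  by_cases hi : i ∈ I
  · simp [indD, Matrix.diagonal_mul, hi]
  · simp [indD, Matrix.diagonal_mul, hi, congrFun (hWrow i hi) a]

lemma trace_indD {d : ℕ} (I : Finset (Fin d)) (A : Matrix (Fin d) (Fin d) ℝ) :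
    (indD I * A * indD I).trace = ∑ i ∈ I, A i i := by
  classical
  rw [Matrix.trace]
  simp only [Matrix.diag, indD, Matrix.mul_diagonal, Matrix.diagonal_mul, ite_mul, one_mul,
    zero_mul, mul_ite, mul_one, mul_zero]
  simp [Finset.sum_ite_mem]

lemma trace_conj_eq {d m : ℕ} (I : Finset (Fin d)) (A : Matrix (Fin d) (Fin d) ℝ)
    (W : Matrix (Fin d) (Fin m) ℝ) (hWrow : ∀ i ∉ I, W i = 0) :
    (Wᵀ * A * W).trace = ((W * Wᵀ) * (indD I * A * indD I)).trace := by
  have hDW : indD I * W = W := indD_mul_eq_self hWrow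
  have hWD : Wᵀ * indD I = Wᵀ := by
    have := congrArg Matrix.transpose hDW
    rwa [Matrix.transpose_mul, indD, Matrix.diagonal_transpose, ← indD] at this
  have hPD : (W * Wᵀ) * indD I = W * Wᵀ := by rw [Matrix.mul_assoc, hWD]
  have hDP : indD I * (W * Wᵀ) = W * Wᵀ := by rw [← Matrix.mul_assoc, hDW]
  have h1 : (W * Wᵀ) * (indD I * A * indD I) = (W * Wᵀ) * A * indD I := by
    rw [← Matrix.mul_assoc, ← Matrix.mul_assoc, hPD]
  rw [h1, Matrix.trace_mul_comm (W * Wᵀ * A) (indD I), ← Matrix.mul_assoc, hDP]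
  rw [Matrix.trace_mul_cycle Wᵀ A W]

lemma posSemidef_one_sub_proj {d m : ℕ} {W : Matrix (Fin d) (Fin m) ℝ}
    (hWtW : Wᵀ * W = 1) : (1 - W * Wᵀ).PosSemidef := by
  set P := W * Wᵀ with hP
  have hPP : P * P = P := by
    rw [hP, Matrix.mul_assoc, ← Matrix.mul_assoc Wᵀ, hWtW, Matrix.one_mul]
  have hPt : Pᵀ = P := by rw [hP, Matrix.transpose_mul, Matrix.transpose_transpose]
  have h := Matrix.posSemidef_conjTranspose_mul_self (1 - P)
  have hh : (1 - P)ᴴ = 1 - P := by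
    rw [Matrix.conjTranspose_eq_transpose_of_trivial, Matrix.transpose_sub,
      Matrix.transpose_one, hPt]
  rw [hh] at h
  rwa [show (1 - P) * (1 - P) = 1 - P by
    rw [sub_mul, one_mul, mul_sub, mul_one, hPP, sub_self, sub_zero]] at h

lemma indD_psd {d : ℕ} (I : Finset (Fin d)) (A : Matrix (Fin d) (Fin d) ℝ)
    (hA : A.PosSemidef) : (indD I * A * indD I).PosSemidef := by
  have h := hA.mul_mul_conjTranspose_same (indD I)
  rwa [Matrix.conjTranspose_eq_transpose_of_trivial, indD, Matrix.diagonal_transpose,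
    ← indD] at h

lemma feasible_trace_le {d m k : ℕ} (hkd : k ≤ d)
    (A : Matrix (Fin d) (Fin d) ℝ) (hA : A.PosSemidef)
    (W : Matrix (Fin d) (Fin m) ℝ) (hW : feasible d m k W) :
    ∃ I : Finset (Fin d), I.card = k ∧ (Wᵀ * A * W).trace ≤ ∑ i ∈ I, A i i := by
  classical
  obtain ⟨hWtW, hsupp⟩ := hW
  set s : Finset (Fin d) := (Set.toFinite {i | W i ≠ 0}).toFinset with hs
  have hscard : s.card ≤ k := by
    rw [hs, ← Set.ncard_eq_toFinset_card _ (Set.toFinite _)]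
    exact hsupp
  obtain ⟨I, hsI, _, hIcard⟩ := Finset.exists_subsuperset_card_eq s.subset_univ hscard
    (by simpa using hkd)
  have hWrow : ∀ i ∉ I, W i = 0 := by
    intro i hi
    by_contra h
    exact hi (hsI (by simp [hs, h]))
  refine ⟨I, hIcard, ?_⟩
  rw [trace_conj_eq I A W hWrow]
  set B := indD I * A * indD I with hB
  have hBpsd : B.PosSemidef := indD_psd I A hA
  have h1 : (1 - W * Wᵀ) * B = B - (W * Wᵀ) * B := by rw [sub_mul, one_mul]
  have h2 : 0 ≤ ((1 - W * Wᵀ) * B).trace :=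
    trace_mul_nonneg (posSemidef_one_sub_proj hWtW) hBpsd
  rw [h1, Matrix.trace_sub] at h2
  have h3 := trace_indD I A
  rw [← hB] at h3
  linarith

lemma exists_feasible_trace_eq {d m k : ℕ} (hmk : m ≤ k)
    (A : Matrix (Fin d) (Fin d) ℝ) (hA : A.PosSemidef) (hrank : A.rank ≤ m)
    (I : Finset (Fin d)) (hI : I.card = k) :
    ∃ W : Matrix (Fin d) (Fin m) ℝ, feasible d m k W ∧
      (Wᵀ * A * W).trace = ∑ i ∈ I, A i i := by
  classical
  set B : Matrix (Fin d) (Fin d) ℝ := indD I * A * indD I with hB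
  set e := (WithLp.linearEquiv 2 ℝ (Fin d → ℝ)) with he
  set S : Submodule ℝ (EuclideanSpace ℝ (Fin d)) :=
    (LinearMap.range B.mulVecLin).map (e.symm : (Fin d → ℝ) →ₗ[ℝ] EuclideanSpace ℝ (Fin d))
    with hS
  have hSrank : finrank ℝ S = B.rank := LinearEquiv.finrank_map_eq e.symm _
  have hBrank : B.rank ≤ m :=
    le_trans (le_trans (Matrix.rank_mul_le_left _ _) (Matrix.rank_mul_le_right _ _)) hrank
  have hBzero : ∀ i ∉ I, ∀ j, B i j = 0 := by
    intro i hi j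
    simp [hB, indD, Matrix.mul_diagonal, Matrix.diagonal_mul, if_neg hi]
  have hesymm : ∀ (v : Fin d → ℝ) (i : Fin d),
      ((e.symm : (Fin d → ℝ) →ₗ[ℝ] EuclideanSpace ℝ (Fin d)) v) i = v i := fun _ _ => rfl
  have hSle : S ≤ coordSub I := by
    rintro x ⟨y, ⟨z, rfl⟩, rfl⟩ i hi
    rw [hesymm]
    show (B *ᵥ z) i = 0
    simp [Matrix.mulVec, dotProduct, fun j => hBzero i hi j]
  obtain ⟨T, hST, hTle, hTfr⟩ := exists_between_finrank S (coordSub I) hSle m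
    (by rw [hSrank]; exact hBrank)
    (le_trans (show m ≤ I.card by omega) (le_finrank_coordSub I))
  let ob : OrthonormalBasis (Fin m) ℝ T :=
    (stdOrthonormalBasis ℝ T).reindex (finCongr hTfr)
  set W : Matrix (Fin d) (Fin m) ℝ := fun i a => ((ob a : EuclideanSpace ℝ (Fin d)) i) with hW
  have hWrow : ∀ i ∉ I, W i = 0 := by
    intro i hi
    funext a
    exact hTle (ob a).2 i hi
  have hWtW : Wᵀ * W = 1 := by
    have horth := ob.orthonormal
    rw [orthonormal_iff_ite] at horth
    ext a b
    have h := horth a b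
    rw [Submodule.coe_inner, PiLp.inner_apply] at h
    simp only [RCLike.inner_apply, starRingEnd_apply, star_trivial] at h
    simp only [Matrix.mul_apply, Matrix.transpose_apply, Matrix.one_apply, hW]
    convert h using 2
    exact (Finset.sum_congr rfl fun x _ => mul_comm _ _ : ∑ x, (ob a : EuclideanSpace ℝ (Fin d)) x
      * (ob b : EuclideanSpace ℝ (Fin d)) x = _)
  have hfeas : feasible d m k W := by
    refine ⟨hWtW, ?_⟩
    have hsub : {i | W i ≠ 0} ⊆ (I : Set (Fin d)) := by
      intro i hi
      by_contra h
      exact hi (hWrow i (by simpa using h))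
    calc {i | W i ≠ 0}.ncard ≤ (I : Set (Fin d)).ncard :=
          Set.ncard_le_ncard hsub (Set.toFinite _)
      _ = I.card := Set.ncard_coe_finset I
      _ = k := hI
  set P := W * Wᵀ with hP
  have hProj : ∀ x : T, P *ᵥ (fun i => ((x : EuclideanSpace ℝ (Fin d)) i))
      = fun i => ((x : EuclideanSpace ℝ (Fin d)) i) := by
    intro x
    have hrepr := ob.sum_repr' x
    funext i
    set L : T →ₗ[ℝ] ℝ :=
      ((LinearMap.proj i).comp e.toLinearMap).comp T.subtype with hL
    have hc := congrArg L hrepr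
    rw [map_sum] at hc
    simp only [LinearMap.map_smul, smul_eq_mul] at hc
    rw [← Matrix.mulVec_mulVec]
    show ∑ a, W i a * (Wᵀ *ᵥ fun j => ((x : EuclideanSpace ℝ (Fin d)) j)) a
      = (x : EuclideanSpace ℝ (Fin d)) i
    have hLx : L x = (x : EuclideanSpace ℝ (Fin d)) i := rfl
    rw [← hLx, ← hc]
    apply Finset.sum_congr rfl
    intro a _
    have hinner : (inner ℝ (ob a) x : ℝ)
        = ∑ j, (ob a : EuclideanSpace ℝ (Fin d)) j * (x : EuclideanSpace ℝ (Fin d)) j := by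
      rw [Submodule.coe_inner, PiLp.inner_apply]
      simp [RCLike.inner_apply, starRingEnd_apply]
      exact Finset.sum_congr rfl fun _ _ => mul_comm _ _
    have hLa : L (ob a) = (ob a : EuclideanSpace ℝ (Fin d)) i := rfl
    rw [hinner, hLa]
    exact mul_comm _ _
  have hPB : P * B = B := by
    ext i j
    have hmem : (e.symm : (Fin d → ℝ) →ₗ[ℝ] EuclideanSpace ℝ (Fin d)) (B *ᵥ Pi.single j 1) ∈ T :=
      hST (Submodule.mem_map_of_mem (LinearMap.mem_range_self B.mulVecLin (Pi.single j 1)))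
    have h1 : (P *ᵥ fun l => ((e.symm : (Fin d → ℝ) →ₗ[ℝ] EuclideanSpace ℝ (Fin d))
        (B *ᵥ Pi.single j 1)) l) i
        = ((e.symm : (Fin d → ℝ) →ₗ[ℝ] EuclideanSpace ℝ (Fin d)) (B *ᵥ Pi.single j 1)) i :=
      congrFun (hProj ⟨_, hmem⟩) i
    have h3 : (fun l => ((e.symm : (Fin d → ℝ) →ₗ[ℝ] EuclideanSpace ℝ (Fin d))
        (B *ᵥ Pi.single j 1)) l) = fun l => B l j := by
      funext l
      show (B *ᵥ Pi.single j 1) l = B l j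
      simp
    rw [h3] at h1
    have h4 : ((e.symm : (Fin d → ℝ) →ₗ[ℝ] EuclideanSpace ℝ (Fin d)) (B *ᵥ Pi.single j 1)) i
        = B i j := by
      show (B *ᵥ Pi.single j 1) i = B i j
      simp
    rw [h4] at h1
    simpa [Matrix.mul_apply, Matrix.mulVec, dotProduct] using h1
  refine ⟨W, hfeas, ?_⟩
  rw [trace_conj_eq I A W hWrow, ← hB, ← hP, hPB, hB, trace_indD]

end Aux

open Module Submodule in
/-- for a PSD matrix `A` with `rank A ≤ m`, the maximum of `Tr(Wᵀ A W)`
over the FSPCA feasible set `F(d,m,k)` is attained and equals the sum of the `k`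
largest diagonal entries of `A` (i.e. the maximum over index sets of cardinality `k`
of the corresponding diagonal sums). -/
theorem fspca_lowrank_global (d m k : ℕ) (hd : 0 < d) (hm : 0 < m) (hmk : m ≤ k)
    (hkd : k ≤ d) (A : Matrix (Fin d) (Fin d) ℝ) (hA : A.PosSemidef)
    (hrank : A.rank ≤ m) :
    ∃ c : ℝ,
      IsGreatest {x : ℝ | ∃ I : Finset (Fin d), I.card = k ∧ x = ∑ i ∈ I, A i i} c ∧
      IsGreatest {x : ℝ | ∃ W : Matrix (Fin d) (Fin m) ℝ, feasible d m k W ∧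
        x = (Wᵀ * A * W).trace} c := by
  classical
  obtain ⟨I0, hI0⟩ := Finset.powersetCard_nonempty.mpr
    (show k ≤ (Finset.univ : Finset (Fin d)).card by simpa using hkd)
  obtain ⟨Istar, hmem, hmax⟩ := Finset.exists_max_image
    (Finset.univ.powersetCard k) (fun I => ∑ i ∈ I, A i i) ⟨I0, hI0⟩
  have hcard : Istar.card = k := (Finset.mem_powersetCard.mp hmem).2
  refine ⟨∑ i ∈ Istar, A i i, ⟨⟨Istar, hcard, rfl⟩, ?_⟩, ?_, ?_⟩
  · rintro x ⟨I, hIc, rfl⟩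
    exact hmax I (Finset.mem_powersetCard.mpr ⟨Finset.subset_univ I, hIc⟩)
  · obtain ⟨W, hfeas, htr⟩ := exists_feasible_trace_eq hmk A hA hrank Istar hcard
    exact ⟨W, hfeas, htr.symm⟩
  · rintro x ⟨W, hfeas, rfl⟩
    obtain ⟨I, hIc, hle⟩ := feasible_trace_le hkd A hA W hfeas
    exact le_trans hle (hmax I (Finset.mem_powersetCard.mpr ⟨Finset.subset_univ I, hIc⟩))
end

section
/- Let d, m be positive integers with m ≤ d and let A ∈ ℝ^{d×d} be a symmetric positive semidefinite matrix (of arbitrary rank). Then the maximum of Tr(Wᵀ A W) over the FSPCA feasible set F(d,m,m) (i.e., sparsity level k = m) is attained and equals the sum of the m largest diagonal entries of A. -/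
open Matrix

lemma fspca_trace_expand {d m : ℕ} (A : Matrix (Fin d) (Fin d) ℝ) (W : Matrix (Fin d) (Fin m) ℝ) :
    (Wᵀ * A * W).trace = ∑ i : Fin d, ∑ j : Fin d, A i j * ∑ b : Fin m, W i b * W j b := by
  have key : ∀ F : Fin d → Fin d → Fin m → ℝ,
      (∑ b : Fin m, ∑ j : Fin d, ∑ i : Fin d, F i j b)
        = ∑ i : Fin d, ∑ j : Fin d, ∑ b : Fin m, F i j b := by
    intro F
    calc (∑ b : Fin m, ∑ j : Fin d, ∑ i : Fin d, F i j b)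
        = ∑ j : Fin d, ∑ b : Fin m, ∑ i : Fin d, F i j b := Finset.sum_comm
      _ = ∑ j : Fin d, ∑ i : Fin d, ∑ b : Fin m, F i j b :=
          Finset.sum_congr rfl fun _ _ => Finset.sum_comm
      _ = ∑ i : Fin d, ∑ j : Fin d, ∑ b : Fin m, F i j b := Finset.sum_comm
  have hmul : ∀ i j : Fin d, A i j * ∑ b : Fin m, W i b * W j b
      = ∑ b : Fin m, W i b * A i j * W j b := by
    intro i j
    rw [Finset.mul_sum]
    exact Finset.sum_congr rfl fun b _ => by ring
  simp only [hmul, Matrix.trace, Matrix.diag, Matrix.mul_apply, Matrix.transpose_apply,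
    Finset.sum_mul]
  exact key fun i j b => W i b * A i j * W j b

lemma fspca_diag_sum {d : ℕ} (A : Matrix (Fin d) (Fin d) ℝ) (I : Finset (Fin d)) :
    (∑ i : Fin d, ∑ j : Fin d, A i j * (if i = j ∧ i ∈ I then 1 else 0))
      = ∑ i ∈ I, A i i := by
  have h1 : ∀ i : Fin d, (∑ j : Fin d, A i j * (if i = j ∧ i ∈ I then 1 else 0))
      = if i ∈ I then A i i else 0 := by
    intro i
    by_cases hi : i ∈ I
    · simp only [hi, and_true, mul_ite, mul_one, mul_zero, if_true]
      exact Finset.sum_ite_eq Finset.univ i (fun j => A i j) |>.trans (by simp)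
    · simp [hi]
  simp only [h1]
  rw [Finset.sum_ite_mem]
  simp

/-- for a PSD matrix `A` (arbitrary rank) and sparsity level `k = m`,
the maximum of `Tr(Wᵀ A W)` over `F(d,m,m)` is attained and equals the sum of the
`m` largest diagonal entries of `A`. -/
theorem fspca_k_eq_m_global (d m : ℕ) (hd : 0 < d) (hm : 0 < m) (hmd : m ≤ d)
    (A : Matrix (Fin d) (Fin d) ℝ) (hA : A.PosSemidef) :
    ∃ c : ℝ,
      IsGreatest {x : ℝ | ∃ I : Finset (Fin d), I.card = m ∧ x = ∑ i ∈ I, A i i} c ∧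
      IsGreatest {x : ℝ | ∃ W : Matrix (Fin d) (Fin m) ℝ, feasible d m m W ∧
        x = (Wᵀ * A * W).trace} c := by
  classical
  have hne : (Finset.powersetCard m (Finset.univ : Finset (Fin d))).Nonempty := by
    rw [Finset.powersetCard_nonempty]
    simpa using hmd
  obtain ⟨I₀, hI₀mem, hI₀max⟩ :=
    Finset.exists_max_image (Finset.powersetCard m Finset.univ)
      (fun I => ∑ i ∈ I, A i i) hne
  have hI₀card : I₀.card = m := (Finset.mem_powersetCard.mp hI₀mem).2
  set c : ℝ := ∑ i ∈ I₀, A i i with hc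
  have hub : ∀ J : Finset (Fin d), J.card = m → (∑ i ∈ J, A i i) ≤ c := by
    intro J hJ
    exact hI₀max J (Finset.mem_powersetCard.mpr ⟨J.subset_univ, hJ⟩)
  refine ⟨c, ⟨⟨I₀, hI₀card, rfl⟩, ?_⟩, ?_, ?_⟩
  · rintro x ⟨I, hI, rfl⟩
    exact hub I hI
  · -- membership in S2: construct W from I₀
    have g : Fin m ≃ {x // x ∈ I₀} := (Finset.equivFinOfCardEq hI₀card).symm
    set W : Matrix (Fin d) (Fin m) ℝ := fun i b => if ((g b : Fin d) = i) then 1 else 0 with hW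
    have hWtW : Wᵀ * W = 1 := by
      ext a b
      simp only [Matrix.mul_apply, Matrix.transpose_apply, hW, ite_mul, one_mul, zero_mul,
        Finset.sum_ite_eq, Finset.mem_univ, if_true, Matrix.one_apply]
      by_cases h : a = b
      · erw [Matrix.mul_apply]
        simp [h, Matrix.mul_apply, Matrix.transpose, Matrix.of_apply]
      · have hgg : ((g b : Fin d) ≠ (g a : Fin d)) := by
          intro hh
          exact h (g.injective (Subtype.ext hh)).symm
        erw [Matrix.mul_apply]
        simp [h, hgg, Matrix.mul_apply, Matrix.transpose, Matrix.of_apply]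
    have hsupp : {i | W i ≠ 0} ⊆ ↑I₀ := by
      intro i hi
      simp only [Set.mem_setOf_eq, hW] at hi
      by_contra hni
      apply hi
      funext b
      have hgb : (g b : Fin d) ≠ i := by
        intro hh; exact hni (hh ▸ (g b).2)
      simp [hgb]
    have hP : ∀ i j : Fin d, (∑ b : Fin m, W i b * W j b)
        = if i = j ∧ i ∈ I₀ then 1 else 0 := by
      intro i j
      by_cases hi : i ∈ I₀
      · have hga : ((g (g.symm ⟨i, hi⟩) : {x // x ∈ I₀}) : Fin d) = i := by
          rw [g.apply_symm_apply]
        have hstep : ∀ b : Fin m, W i b * W j b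
            = if b = g.symm ⟨i, hi⟩ then W j b else 0 := by
          intro b
          by_cases hb : b = g.symm ⟨i, hi⟩
          · subst hb; simp [hW, hga]
          · have hne' : (g b : Fin d) ≠ i := by
              intro hh
              apply hb
              have : g b = ⟨i, hi⟩ := Subtype.ext hh
              rw [← this, g.symm_apply_apply]
            simp [hW, hne', hb]
        rw [Finset.sum_congr rfl fun b _ => hstep b,
          Finset.sum_ite_eq' Finset.univ (g.symm ⟨i, hi⟩) (fun b => W j b)]
        by_cases hij : i = j
        · subst hij
          simp [eq_comm, hW, hga, hi]
        · simp [hij, eq_comm, hW, hga, hi]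
      · have : ∀ b : Fin m, W i b = 0 := by
          intro b
          have : (g b : Fin d) ≠ i := by
            intro hh; exact hi (hh ▸ (g b).2)
          simp [hW, this]
        simp [this, hi]
    refine ⟨W, ⟨hWtW, ?_⟩, ?_⟩
    · calc {i | W i ≠ 0}.ncard ≤ (↑I₀ : Set (Fin d)).ncard :=
            Set.ncard_le_ncard hsupp (Set.toFinite _)
        _ = m := by rw [Set.ncard_coe_finset, hI₀card]
    · rw [fspca_trace_expand]
      simp only [hP]
      rw [fspca_diag_sum]
  · -- upper bound for S2
    rintro x ⟨W, ⟨hW1, hW2⟩, rfl⟩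
    set S : Finset (Fin d) := (Set.toFinite {i | W i ≠ 0}).toFinset with hSdef
    have hSmem : ∀ i : Fin d, i ∈ S ↔ W i ≠ 0 := by
      intro i; rw [hSdef, Set.Finite.mem_toFinset, Set.mem_setOf_eq]
    have hScard_le : S.card ≤ m := by
      rw [← Set.ncard_eq_toFinset_card]
      exact hW2
    -- key summation identity
    have hsum : ∀ a b : Fin m, (∑ i ∈ S.attach, W (i : Fin d) a * W (i : Fin d) b)
        = (1 : Matrix (Fin m) (Fin m) ℝ) a b := by
      intro a b
      rw [Finset.sum_attach S (fun i => W i a * W i b)]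
      rw [Finset.sum_subset (Finset.subset_univ S) (fun i _ hi => by
        have : W i = 0 := by
          by_contra h; exact hi ((hSmem i).mpr h)
        simp [this])]
      have := congrFun (congrFun hW1 a) b
      simpa [Matrix.mul_apply, Matrix.transpose_apply] using this
    -- restricted matrix
    set U : Matrix {x // x ∈ S} (Fin m) ℝ := fun i b => W (i : Fin d) b with hUdef
    have hU : Uᵀ * U = 1 := by
      ext a b
      rw [Matrix.mul_apply]
      simp only [Matrix.transpose_apply, hUdef]
      have : (Finset.univ : Finset {x // x ∈ S}) = S.attach := rfl
      rw [this]
      exact hsum a b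
    -- m ≤ S.card via injectivity
    have hinj : Function.Injective U.mulVecLin := by
      have hcomp : Uᵀ.mulVecLin.comp U.mulVecLin = LinearMap.id := by
        rw [← Matrix.mulVecLin_mul, hU, Matrix.mulVecLin_one]
      intro x y hxy
      have hx := LinearMap.congr_fun hcomp x
      have hy := LinearMap.congr_fun hcomp y
      simp only [LinearMap.comp_apply, LinearMap.id_apply] at hx hy
      rw [← hx, ← hy, hxy]
    have hmle : m ≤ S.card := by
      have := LinearMap.finrank_le_finrank_of_injective hinj
      simpa [Module.finrank_fintype_fun_eq_card, Fintype.card_coe] using this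
    have hScard : S.card = m := le_antisymm hScard_le hmle
    -- square matrix V and projection identity
    have e : Fin m ≃ {x // x ∈ S} := (Finset.equivFinOfCardEq hScard).symm
    set V : Matrix (Fin m) (Fin m) ℝ := fun a b => W ((e a : Fin d)) b with hVdef
    have hV : Vᵀ * V = 1 := by
      ext a b
      rw [Matrix.mul_apply]
      simp only [Matrix.transpose_apply, hVdef]
      have huniv : (Finset.univ : Finset {x // x ∈ S}) = S.attach := rfl
      rw [← hsum a b, ← huniv]
      exact Equiv.sum_comp e (fun i => W (i : Fin d) a * W (i : Fin d) b)
    have hVV : V * Vᵀ = 1 := mul_eq_one_comm.mp hV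
    have hP : ∀ i j : Fin d, (∑ b : Fin m, W i b * W j b)
        = if i = j ∧ i ∈ S then 1 else 0 := by
      intro i j
      by_cases hi : i ∈ S
      · by_cases hj : j ∈ S
        · have h1 : W i = W ((e (e.symm ⟨i, hi⟩) : Fin d)) := by
            rw [e.apply_symm_apply]
          have h2 : W j = W ((e (e.symm ⟨j, hj⟩) : Fin d)) := by
            rw [e.apply_symm_apply]
          have := congrFun (congrFun hVV (e.symm ⟨i, hi⟩)) (e.symm ⟨j, hj⟩)
          rw [Matrix.mul_apply] at this
          simp only [Matrix.transpose_apply, hVdef, Matrix.one_apply] at this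
          rw [h1, h2]
          simp only [Matrix.transpose, Matrix.of_apply] at this
          rw [this]
          have hequiv : (e.symm ⟨i, hi⟩ = e.symm ⟨j, hj⟩) ↔ i = j := by
            rw [Equiv.apply_eq_iff_eq, Subtype.mk_eq_mk]
          by_cases hij : i = j
          · simp [hij, hi, hj, hequiv.mpr hij]
          · simp [hij, fun h => hij (hequiv.mp h)]
        · have hz : W j = 0 := by
            by_contra h; exact hj ((hSmem j).mpr h)
          have hij : i ≠ j := fun h => hj (h ▸ hi)
          simp [hz, hij]
      · have hz : W i = 0 := by
          by_contra h; exact hi ((hSmem i).mpr h)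
        simp [hz, hi]
    rw [fspca_trace_expand]
    simp only [hP]
    rw [fspca_diag_sum]
    exact hub S hScard
end

section
/- Let d, m, k be positive integers with m ≤ k ≤ d and let A ∈ ℝ^{d×d} be a symmetric positive semidefinite matrix. Then the supremum of Tr(Wᵀ A W) over the FSPCA feasible set F(d,m,k) is attained and equals the maximum, over all index sets I ⊆ {1,…,d} with card(I) = k, of the sum of the m largest eigenvalues of the principal submatrix A_{I,I}. -/
open Matrix

/-- The eigenvalues of a real matrix, sorted in non-increasing order
(`0` if the matrix is not Hermitian). -/
noncomputable def eigsDesc {n : ℕ} (M : Matrix (Fin n) (Fin n) ℝ) : Fin n → ℝ :=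
  if hM : M.IsHermitian then
    fun i => -((fun j => -hM.eigenvalues j) ∘ Tuple.sort fun j => -hM.eigenvalues j) i
  else 0

lemma eigsDesc_eq {n : ℕ} {M : Matrix (Fin n) (Fin n) ℝ} (hM : M.IsHermitian) :
    eigsDesc M = fun i =>
      hM.eigenvalues (Tuple.sort (fun j => -hM.eigenvalues j) i) := by
  unfold eigsDesc
  rw [dif_pos hM]
  funext i
  simp

lemma eigsDesc_antitone {n : ℕ} {M : Matrix (Fin n) (Fin n) ℝ} (hM : M.IsHermitian) :
    Antitone (eigsDesc M) := by
  have h := Tuple.monotone_sort (fun j => -hM.eigenvalues j)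
  rw [eigsDesc_eq hM]
  intro a b hab
  have := h hab
  simp only [Function.comp_apply, neg_le_neg_iff] at this
  exact this

/-- Sum over the first `m` indices as a filtered sum. -/
lemma sum_castLE {n m : ℕ} (hmn : m ≤ n) (g : Fin n → ℝ) :
    ∑ j : Fin m, g (Fin.castLE hmn j)
      = ∑ i ∈ Finset.univ.filter (fun i : Fin n => (i : ℕ) < m), g i := by
  refine Finset.sum_bij' (fun j _ => Fin.castLE hmn j)
    (fun i hi => ⟨(i : ℕ), (Finset.mem_filter.mp hi).2⟩) ?_ ?_ ?_ ?_ ?_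
  · intro a _; simp [Fin.castLE]
  · intro a _; simp
  · intro a _; rfl
  · intro a ha; ext; rfl
  · intro a _; rfl

/-- The key combinatorial inequality: if `f` is antitone and `q` is a "fractional
selection" of total mass `m`, then `∑ f i * q i` is at most the sum of the `m`
largest values of `f`. -/
lemma sum_mul_le_top {n m : ℕ} (hm : 0 < m) (hmn : m ≤ n) (f q : Fin n → ℝ)
    (hf : Antitone f) (hq0 : ∀ i, 0 ≤ q i) (hq1 : ∀ i, q i ≤ 1)
    (hqs : ∑ i, q i = m) :
    ∑ i, f i * q i ≤ ∑ j : Fin m, f (Fin.castLE hmn j) := by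
  have hmn' : m - 1 < n := lt_of_lt_of_le (Nat.sub_lt hm one_pos) hmn
  set t : ℝ := f ⟨m - 1, hmn'⟩ with ht
  set P : Finset (Fin n) := Finset.univ.filter (fun i : Fin n => (i : ℕ) < m) with hP
  rw [sum_castLE hmn f]
  have hcard : ∑ i ∈ P, (1 : ℝ) = (m : ℝ) := by
    rw [← sum_castLE hmn (fun _ => (1:ℝ))]
    simp
  have hsplit := Finset.sum_filter_add_sum_filter_not Finset.univ
    (fun i : Fin n => (i : ℕ) < m) (fun i => f i * q i)
  have hsplitq := Finset.sum_filter_add_sum_filter_not Finset.univ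
    (fun i : Fin n => (i : ℕ) < m) q
  -- bound the two parts
  have h1 : ∑ i ∈ P, f i * q i ≤ ∑ i ∈ P, (f i + t * (q i - 1)) := by
    refine Finset.sum_le_sum ?_
    intro i hi
    have hi' : (i : ℕ) < m := (Finset.mem_filter.mp hi).2
    have hti : t ≤ f i := hf (by
      show i ≤ (⟨m - 1, hmn'⟩ : Fin n)
      exact Fin.mk_le_of_le_val (Nat.le_sub_one_of_lt hi'))
    nlinarith [hq1 i, hq0 i]
  have h2 : ∑ i ∈ Finset.univ.filter (fun i : Fin n => ¬ (i : ℕ) < m), f i * q i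
      ≤ ∑ i ∈ Finset.univ.filter (fun i : Fin n => ¬ (i : ℕ) < m), t * q i := by
    refine Finset.sum_le_sum ?_
    intro i hi
    have hi' : ¬ (i : ℕ) < m := (Finset.mem_filter.mp hi).2
    have hti : f i ≤ t := hf (by
      show (⟨m - 1, hmn'⟩ : Fin n) ≤ i
      exact Fin.mk_le_of_le_val (le_trans (Nat.sub_le m 1) (Nat.le_of_not_lt hi')))
    nlinarith [hq0 i]
  have hPt : ∑ _x ∈ P, t = t * (m : ℝ) := by
    rw [← hcard, Finset.mul_sum]; simp
  have expand : ∑ i ∈ P, (f i + t * (q i - 1))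
      + ∑ i ∈ Finset.univ.filter (fun i : Fin n => ¬ (i : ℕ) < m), t * q i
      = ∑ i ∈ P, f i + t * ((∑ i, q i) - m) := by
    rw [← hsplitq]
    simp only [Finset.sum_add_distrib, mul_sub, mul_add, mul_one,
      Finset.sum_sub_distrib, Finset.mul_sum]
    rw [hPt]
    ring
  calc ∑ i, f i * q i
      = ∑ i ∈ P, f i * q i
        + ∑ i ∈ Finset.univ.filter (fun i : Fin n => ¬ (i : ℕ) < m), f i * q i := by
        rw [hsplit]
    _ ≤ ∑ i ∈ P, (f i + t * (q i - 1))
        + ∑ i ∈ Finset.univ.filter (fun i : Fin n => ¬ (i : ℕ) < m), t * q i :=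
        add_le_add h1 h2
    _ = ∑ i ∈ P, f i + t * ((∑ i, q i) - m) := expand
    _ = ∑ i ∈ P, f i := by rw [hqs]; ring

/-- trace of `Cᵀ * diagonal dvec * C` as a weighted sum of squared row norms. -/
lemma trace_transpose_diagonal_mul {n m : ℕ} (dvec : Fin n → ℝ)
    (C : Matrix (Fin n) (Fin m) ℝ) :
    (Cᵀ * Matrix.diagonal dvec * C).trace = ∑ j, dvec j * ∑ a, (C j a) ^ 2 := by
  have hentry : ∀ a, (Cᵀ * Matrix.diagonal dvec * C) a a
      = ∑ j, C j a * dvec j * C j a := by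
    intro a
    rw [Matrix.mul_apply]
    refine Finset.sum_congr rfl fun j _ => ?_
    rw [Matrix.mul_diagonal, Matrix.transpose_apply]
  rw [Matrix.trace]
  simp only [Matrix.diag, hentry]
  rw [Finset.sum_comm]
  refine Finset.sum_congr rfl fun j _ => ?_
  rw [Finset.mul_sum]
  refine Finset.sum_congr rfl fun a _ => ?_
  ring

/-- Ky Fan: upper bound for `tr (Vᵀ M V)` over matrices with orthonormal columns. -/
lemma kyFan_le {n m : ℕ} (hm : 0 < m) (hmn : m ≤ n) (M : Matrix (Fin n) (Fin n) ℝ)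
    (hM : M.IsHermitian) (V : Matrix (Fin n) (Fin m) ℝ) (hV : Vᵀ * V = 1) :
    (Vᵀ * M * V).trace ≤ ∑ j : Fin m, eigsDesc M (Fin.castLE hmn j) := by
  set U : Matrix (Fin n) (Fin n) ℝ := (hM.eigenvectorUnitary : Matrix (Fin n) (Fin n) ℝ)
    with hUdef
  have hstar : star U = Uᵀ := by
    rw [Matrix.star_eq_conjTranspose, Matrix.conjTranspose_eq_transpose_of_trivial]
  have hUUt : U * Uᵀ = 1 := by
    rw [← hstar]; exact Matrix.mem_unitaryGroup_iff.mp hM.eigenvectorUnitary.2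
  have hspec : M = U * Matrix.diagonal hM.eigenvalues * Uᵀ := by
    have h := hM.spectral_theorem
    rw [Unitary.conjStarAlgAut_apply, ← hUdef] at h
    rw [hstar] at h
    simpa [RCLike.ofReal_real_eq_id] using h
  set C : Matrix (Fin n) (Fin m) ℝ := Uᵀ * V with hCdef
  have hconj : Vᵀ * M * V = Cᵀ * Matrix.diagonal hM.eigenvalues * C := by
    rw [hCdef]
    conv_lhs => rw [hspec]
    simp only [Matrix.transpose_mul, Matrix.transpose_transpose, Matrix.mul_assoc]
  have hCC : Cᵀ * C = 1 := by
    rw [hCdef]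
    simp only [Matrix.transpose_mul, Matrix.transpose_transpose]
    calc Vᵀ * U * (Uᵀ * V) = Vᵀ * (U * Uᵀ) * V := by
          simp only [Matrix.mul_assoc]
      _ = Vᵀ * V := by rw [hUUt, Matrix.mul_one]
      _ = 1 := hV
  set p : Fin n → ℝ := fun j => ∑ a, (C j a) ^ 2 with hpdef
  have hp0 : ∀ j, 0 ≤ p j := fun j => Finset.sum_nonneg fun a _ => sq_nonneg _
  have hpsum : ∑ j, p j = (m : ℝ) := by
    have h1 : ∑ j, p j = (Cᵀ * C).trace := by
      rw [Matrix.trace]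
      simp only [Matrix.diag, Matrix.mul_apply, Matrix.transpose_apply]
      rw [Finset.sum_comm]
      refine Finset.sum_congr rfl fun j _ => Finset.sum_congr rfl fun a _ => ?_
      ring
    rw [h1, hCC, Matrix.trace_one]
    simp
  have hp1 : ∀ j, p j ≤ 1 := by
    intro j
    set P : Matrix (Fin n) (Fin n) ℝ := C * Cᵀ with hPdef
    have hPsym : ∀ a b, P b a = P a b := by
      intro a b
      have h : Pᵀ = P := by
        rw [hPdef, Matrix.transpose_mul, Matrix.transpose_transpose]
      exact congrFun (congrFun h a) b
    have hPidem : P * P = P := by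
      rw [hPdef]
      calc C * Cᵀ * (C * Cᵀ) = C * (Cᵀ * C) * Cᵀ := by simp only [Matrix.mul_assoc]
        _ = C * Cᵀ := by rw [hCC, Matrix.mul_one]
    have hPjj : P j j = p j := by
      simp only [hPdef, Matrix.mul_apply, Matrix.transpose_apply, hpdef]
      exact Finset.sum_congr rfl fun a _ => by ring
    have hP2 : P j j = ∑ l, (P j l) ^ 2 := by
      conv_lhs => rw [← hPidem]
      rw [Matrix.mul_apply]
      refine Finset.sum_congr rfl fun l _ => ?_
      rw [hPsym j l]
      ring
    have hsq : (P j j) ^ 2 ≤ P j j := by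
      conv_rhs => rw [hP2]
      exact Finset.single_le_sum (fun l _ => sq_nonneg (P j l)) (Finset.mem_univ j)
    rw [← hPjj]
    nlinarith [hp0 j, hPjj]
  rw [hconj, trace_transpose_diagonal_mul]
  set sigma : Equiv.Perm (Fin n) := Tuple.sort (fun j => -hM.eigenvalues j) with hsig
  have hre : ∑ j, hM.eigenvalues j * p j
      = ∑ j, eigsDesc M j * p (sigma j) := by
    rw [← Equiv.sum_comp sigma (fun j => hM.eigenvalues j * p j)]
    refine Finset.sum_congr rfl fun j _ => ?_
    rw [eigsDesc_eq hM]
  rw [hre]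
  refine sum_mul_le_top hm hmn (eigsDesc M) (fun j => p (sigma j))
    (eigsDesc_antitone hM) (fun i => hp0 _) (fun i => hp1 _) ?_
  rw [Equiv.sum_comp sigma p, hpsum]

/-- Ky Fan: the bound is attained. -/
lemma kyFan_attained {n m : ℕ} (hm : 0 < m) (hmn : m ≤ n)
    (M : Matrix (Fin n) (Fin n) ℝ) (hM : M.IsHermitian) :
    ∃ V : Matrix (Fin n) (Fin m) ℝ, Vᵀ * V = 1 ∧
      (Vᵀ * M * V).trace = ∑ j : Fin m, eigsDesc M (Fin.castLE hmn j) := by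
  set U : Matrix (Fin n) (Fin n) ℝ := (hM.eigenvectorUnitary : Matrix (Fin n) (Fin n) ℝ)
    with hUdef
  have hstar : star U = Uᵀ := by
    rw [Matrix.star_eq_conjTranspose, Matrix.conjTranspose_eq_transpose_of_trivial]
  have hUUt : U * Uᵀ = 1 := by
    rw [← hstar]; exact Matrix.mem_unitaryGroup_iff.mp hM.eigenvectorUnitary.2
  have hUtU : Uᵀ * U = 1 := by
    rw [← hstar]; exact Matrix.mem_unitaryGroup_iff'.mp hM.eigenvectorUnitary.2
  have hspec : M = U * Matrix.diagonal hM.eigenvalues * Uᵀ := by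
    have h := hM.spectral_theorem
    rw [Unitary.conjStarAlgAut_apply, ← hUdef] at h
    rw [hstar] at h
    simpa [RCLike.ofReal_real_eq_id] using h
  set sigma : Equiv.Perm (Fin n) := Tuple.sort (fun j => -hM.eigenvalues j) with hsig
  set g : Fin m → Fin n := fun a => sigma (Fin.castLE hmn a) with hgdef
  have hginj : Function.Injective g :=
    sigma.injective.comp (Fin.castLE_injective hmn)
  refine ⟨Matrix.of fun j a => U j (g a), ?_, ?_⟩
  · ext a b
    have h := congrFun (congrFun hUtU (g a)) (g b)
    simp only [Matrix.mul_apply, Matrix.transpose_apply] at h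
    simp only [Matrix.mul_apply, Matrix.transpose_apply, Matrix.of_apply]
    rw [h, Matrix.one_apply, Matrix.one_apply]
    simp [hginj.eq_iff]
  · have hUV : Uᵀ * (Matrix.of fun j a => U j (g a))
        = Matrix.of fun l a => if l = g a then (1:ℝ) else 0 := by
      ext l a
      have h := congrFun (congrFun hUtU l) (g a)
      simp only [Matrix.mul_apply, Matrix.transpose_apply] at h
      simp only [Matrix.mul_apply, Matrix.transpose_apply, Matrix.of_apply]
      rw [h, Matrix.one_apply]
    have hconj : (Matrix.of fun j a => U j (g a))ᵀ * M * (Matrix.of fun j a => U j (g a))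
        = (Uᵀ * (Matrix.of fun j a => U j (g a)))ᵀ * Matrix.diagonal hM.eigenvalues
          * (Uᵀ * (Matrix.of fun j a => U j (g a))) := by
      conv_lhs => rw [hspec]
      simp only [Matrix.transpose_mul, Matrix.transpose_transpose, Matrix.mul_assoc]
    rw [hconj, hUV, trace_transpose_diagonal_mul]
    have hterm : ∀ j, hM.eigenvalues j
        * ∑ a, ((Matrix.of fun l a => if l = g a then (1:ℝ) else 0) j a) ^ 2
        = ∑ a : Fin m, if j = g a then hM.eigenvalues j else 0 := by
      intro j
      rw [Finset.mul_sum]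
      refine Finset.sum_congr rfl fun a _ => ?_
      simp only [Matrix.of_apply]
      by_cases h : j = g a <;> simp [h]
    simp only [hterm]
    rw [Finset.sum_comm]
    refine Finset.sum_congr rfl fun a _ => ?_
    rw [Finset.sum_ite_eq' Finset.univ (g a)]
    simp only [Finset.mem_univ, if_true]
    rw [eigsDesc_eq hM]

/-- The selection matrix of an injection. -/
def selMat {d k : ℕ} (e : Fin k → Fin d) : Matrix (Fin d) (Fin k) ℝ :=
  fun i j => if i = e j then 1 else 0

lemma selMat_orth {d k : ℕ} {e : Fin k → Fin d} (he : Function.Injective e) :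
    (selMat e)ᵀ * selMat e = 1 := by
  ext a b
  simp only [Matrix.mul_apply, Matrix.transpose_apply, selMat, Matrix.one_apply,
    ite_mul, one_mul, zero_mul]
  rw [Finset.sum_ite_eq' Finset.univ (e a)]
  simp [he.eq_iff, eq_comm]

lemma selMat_conj {d k : ℕ} (e : Fin k → Fin d) (A : Matrix (Fin d) (Fin d) ℝ) :
    (selMat e)ᵀ * A * selMat e = A.submatrix e e := by
  ext a b
  simp only [Matrix.mul_apply, Matrix.transpose_apply, selMat, Matrix.submatrix_apply,
    ite_mul, one_mul, zero_mul, mul_ite, mul_one, mul_zero, Finset.sum_ite_eq,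
    Finset.mem_univ, if_true]
  rw [Finset.sum_ite_eq' Finset.univ (e b)]
  simp only [Finset.mem_univ, if_true]
  rw [Finset.sum_ite_eq' Finset.univ (e a)]
  simp

lemma selMat_mul_support {d k m : ℕ} (e : Fin k → Fin d)
    (V : Matrix (Fin k) (Fin m) ℝ) {i : Fin d} (hi : i ∉ Set.range e) :
    (selMat e * V) i = 0 := by
  funext a
  simp only [Matrix.mul_apply, selMat, ite_mul, one_mul, zero_mul]
  refine Finset.sum_eq_zero fun j _ => ?_
  rw [if_neg]
  intro h
  exact hi ⟨j, h.symm⟩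

lemma selMat_mul_restrict {d k m : ℕ} {e : Fin k → Fin d} (he : Function.Injective e)
    (W : Matrix (Fin d) (Fin m) ℝ) (hsupp : ∀ i, i ∉ Set.range e → W i = 0) :
    selMat e * (Matrix.of fun j a => W (e j) a) = W := by
  ext i a
  simp only [Matrix.mul_apply, selMat, ite_mul, one_mul, zero_mul, Matrix.of_apply]
  by_cases hi : i ∈ Set.range e
  · obtain ⟨j0, rfl⟩ := hi
    rw [Finset.sum_eq_single j0]
    · simp
    · intro b _ hb
      rw [if_neg]
      intro h
      exact hb (he h.symm)
    · intro h; exact absurd (Finset.mem_univ j0) h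
  · rw [hsupp i hi]
    refine (Finset.sum_eq_zero fun j _ => ?_).trans rfl
    rw [if_neg]
    · intro h
      exact hi ⟨j, h.symm⟩

/-- for a PSD matrix `A`, the supremum of `Tr(Wᵀ A W)` over `F(d,m,k)`
is attained and equals the maximum over index sets `I` of cardinality `k` of the
sum of the `m` largest eigenvalues of the principal submatrix `A_{I,I}`. -/
theorem fspca_combinatorial_characterization (d m k : ℕ) (hd : 0 < d) (hm : 0 < m)
    (hmk : m ≤ k) (hkd : k ≤ d)
    (A : Matrix (Fin d) (Fin d) ℝ) (hA : A.PosSemidef) :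
    ∃ c : ℝ,
      IsGreatest {x : ℝ | ∃ I : Finset (Fin d), ∃ hI : I.card = k,
        x = ∑ j : Fin m, eigsDesc
          (A.submatrix (I.orderEmbOfFin hI) (I.orderEmbOfFin hI)) (Fin.castLE hmk j)} c ∧
      IsGreatest {x : ℝ | ∃ W : Matrix (Fin d) (Fin m) ℝ, feasible d m k W ∧
        x = (Wᵀ * A * W).trace} c := by
  classical
  set S1 : Set ℝ := {x : ℝ | ∃ I : Finset (Fin d), ∃ hI : I.card = k,
    x = ∑ j : Fin m, eigsDesc
      (A.submatrix (I.orderEmbOfFin hI) (I.orderEmbOfFin hI)) (Fin.castLE hmk j)} with hS1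
  have hfin : S1.Finite := by
    apply Set.Finite.subset (Set.finite_range (fun I : Finset (Fin d) =>
      if hI : I.card = k then
        ∑ j : Fin m, eigsDesc
          (A.submatrix (I.orderEmbOfFin hI) (I.orderEmbOfFin hI)) (Fin.castLE hmk j)
      else 0))
    rintro x ⟨I, hI, rfl⟩
    exact ⟨I, by simp only [dif_pos hI]⟩
  have hne : S1.Nonempty := by
    obtain ⟨I0, -, hI0⟩ := Finset.exists_subset_card_eq (s := (Finset.univ : Finset (Fin d))) (n := k)
      (by simpa using hkd)
    exact ⟨_, I0, hI0, rfl⟩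
  obtain ⟨c, hcmem, hcub⟩ := Set.exists_max_image S1 id hfin hne
  have conj_transfer : ∀ (S : Matrix (Fin d) (Fin k) ℝ) (B : Matrix (Fin d) (Fin d) ℝ)
      (V : Matrix (Fin k) (Fin m) ℝ),
      (S * V)ᵀ * B * (S * V) = Vᵀ * (Sᵀ * B * S) * V := by
    intro S B V
    simp only [Matrix.transpose_mul, Matrix.mul_assoc]
  have orth_transfer : ∀ (S : Matrix (Fin d) (Fin k) ℝ) (V : Matrix (Fin k) (Fin m) ℝ),
      Sᵀ * S = 1 → (S * V)ᵀ * (S * V) = Vᵀ * V := by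
    intro S V hS
    calc (S * V)ᵀ * (S * V) = Vᵀ * (Sᵀ * S) * V := by
          simp only [Matrix.transpose_mul, Matrix.mul_assoc]
      _ = Vᵀ * V := by rw [hS, Matrix.mul_one]
  refine ⟨c, ⟨hcmem, fun x hx => hcub x hx⟩, ?_, ?_⟩
  · -- the maximum is attained by a feasible W
    obtain ⟨I, hI, hc⟩ := hcmem
    set e : Fin k → Fin d := ⇑(I.orderEmbOfFin hI) with he
    have heinj : Function.Injective e := (I.orderEmbOfFin hI).injective
    have hMh : (A.submatrix e e).IsHermitian := hA.1.submatrix e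
    obtain ⟨V, hV1, hV2⟩ := kyFan_attained hm hmk (A.submatrix e e) hMh
    refine ⟨selMat e * V, ⟨?_, ?_⟩, ?_⟩
    · rw [orth_transfer _ _ (selMat_orth heinj), hV1]
    · have hsub : {i | (selMat e * V) i ≠ 0} ⊆ (I : Set (Fin d)) := by
        intro i hi
        by_contra hiI
        apply hi
        apply selMat_mul_support
        rw [he, Finset.range_orderEmbOfFin]
        exact hiI
      calc {i | (selMat e * V) i ≠ 0}.ncard ≤ (I : Set (Fin d)).ncard :=
            Set.ncard_le_ncard hsub (I.finite_toSet)
        _ = k := by rw [Set.ncard_coe_finset, hI]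
    · rw [conj_transfer, selMat_conj, hV2, hc]
  · -- c is an upper bound for all feasible values
    rintro x ⟨W, ⟨hWo, hWs⟩, rfl⟩
    have hT : {i | W i ≠ 0}.Finite := Set.toFinite _
    have hTcard : hT.toFinset.card ≤ k := by
      rw [← Set.ncard_eq_toFinset_card _ hT]
      exact hWs
    obtain ⟨I, hTI, -, hIcard⟩ := Finset.exists_subsuperset_card_eq
      (hT.toFinset.subset_univ) hTcard (by simpa using hkd)
    set e : Fin k → Fin d := ⇑(I.orderEmbOfFin hIcard) with he
    have heinj : Function.Injective e := (I.orderEmbOfFin hIcard).injective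
    have hMh : (A.submatrix e e).IsHermitian := hA.1.submatrix e
    set V : Matrix (Fin k) (Fin m) ℝ := Matrix.of fun j a => W (e j) a with hV
    have hWV : selMat e * V = W := by
      apply selMat_mul_restrict heinj
      intro i hi
      rw [he, Finset.range_orderEmbOfFin] at hi
      by_contra hWi
      exact hi (hTI (hT.mem_toFinset.mpr hWi))
    have hVV : Vᵀ * V = 1 := by
      rw [← orth_transfer _ _ (selMat_orth heinj), hWV]
      exact hWo
    have hle : (Wᵀ * A * W).trace
        ≤ ∑ j : Fin m, eigsDesc (A.submatrix e e) (Fin.castLE hmk j) := by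
      rw [← hWV, conj_transfer, selMat_conj]
      exact kyFan_le hm hmk (A.submatrix e e) hMh V hVV
    refine le_trans hle (hcub _ ?_)
    exact ⟨I, hIcard, rfl⟩
end

section
/- Let A ∈ ℝ^{d×d} be symmetric positive semidefinite, let W ∈ ℝ^{d×m}, and define the proxy matrix P = A W (Wᵀ A W)† Wᵀ A. Then for every W̃ ∈ ℝ^{d×m} with W̃ᵀ W̃ = I_m, it holds that Tr(W̃ᵀ P W̃) ≤ Tr(W̃ᵀ A W̃). -/
open Matrix

lemma psd_trace_nonneg {n : ℕ} {M : Matrix (Fin n) (Fin n) ℝ} (hM : M.PosSemidef) :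
    0 ≤ M.trace := by
  rw [Matrix.trace]
  apply Finset.sum_nonneg
  intro i _
  exact hM.diag_nonneg

/-- if `A` is PSD and `Bd` is the Moore–Penrose pseudoinverse of
`Wᵀ A W`, then for every `W̃` with `W̃ᵀ W̃ = I_m` the proxy
`P = A W (Wᵀ A W)† Wᵀ A` satisfies `Tr(W̃ᵀ P W̃) ≤ Tr(W̃ᵀ A W̃)`. -/
theorem proxy_minorizes (d m : ℕ) (A : Matrix (Fin d) (Fin d) ℝ) (hA : A.PosSemidef)
    (W : Matrix (Fin d) (Fin m) ℝ)
    (Bd : Matrix (Fin m) (Fin m) ℝ)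
    (h1 : (Wᵀ * A * W) * Bd * (Wᵀ * A * W) = Wᵀ * A * W)
    (h2 : Bd * (Wᵀ * A * W) * Bd = Bd)
    (h3 : ((Wᵀ * A * W) * Bd)ᵀ = (Wᵀ * A * W) * Bd)
    (h4 : (Bd * (Wᵀ * A * W))ᵀ = Bd * (Wᵀ * A * W)) :
    ∀ Wt : Matrix (Fin d) (Fin m) ℝ, Wtᵀ * Wt = 1 →
      (Wtᵀ * (A * W * Bd * Wᵀ * A) * Wt).trace ≤ (Wtᵀ * A * Wt).trace := by
  intro Wt hWt
  have hAsym : Aᵀ = A := by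
    have h := hA.isHermitian.eq
    rwa [Matrix.conjTranspose_eq_transpose_of_trivial] at h
  set B : Matrix (Fin m) (Fin m) ℝ := Wᵀ * A * W with hBdef
  have hBsym : Bᵀ = B := by
    simp only [hBdef, Matrix.transpose_mul, Matrix.transpose_transpose, hAsym, Matrix.mul_assoc]
  clear_value B
  -- Bd is symmetric by uniqueness of the pseudoinverse
  set Y : Matrix (Fin m) (Fin m) ℝ := Bdᵀ with hYdef
  clear_value Y
  have hY1 : B * Y * B = B := by
    have := congrArg Matrix.transpose h1
    simpa [Matrix.transpose_mul, hBsym, hYdef, Matrix.mul_assoc] using this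
  have hY2 : Y * B * Y = Y := by
    have := congrArg Matrix.transpose h2
    simpa [Matrix.transpose_mul, hBsym, hYdef, Matrix.mul_assoc] using this
  have hY3 : B * Y = Bd * B := by
    have h : (Bd * B)ᵀ = Bd * B := h4
    rw [Matrix.transpose_mul, hBsym, ← hYdef] at h
    exact h
  have hY4 : Y * B = B * Bd := by
    have h : (B * Bd)ᵀ = B * Bd := h3
    rw [Matrix.transpose_mul, hBsym, ← hYdef] at h
    exact h
  have hBYsym : (B * Y)ᵀ = B * Y := by rw [hY3]; exact h4
  have hYBsym : (Y * B)ᵀ = Y * B := by rw [hY4]; exact h3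
  -- uniqueness chain
  have step1 : B * Bd = B * Y := by
    calc B * Bd = (B * Y * B) * Bd := by rw [hY1]
    _ = (B * Y) * (B * Bd) := by rw [Matrix.mul_assoc]
    _ = (B * Y)ᵀ * (B * Bd)ᵀ := by rw [hBYsym, h3]
    _ = Yᵀ * (Bᵀ * Bdᵀ * Bᵀ) := by
          simp only [Matrix.transpose_mul, Matrix.mul_assoc]
    _ = Yᵀ * (B * Bd * B)ᵀ := by
          simp only [Matrix.transpose_mul, hBsym, Matrix.mul_assoc]
    _ = Yᵀ * Bᵀ := by rw [h1]
    _ = (B * Y)ᵀ := by rw [Matrix.transpose_mul]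
    _ = B * Y := hBYsym
  have step2 : Bd * B = Y * B := by
    calc Bd * B = Bd * (B * Y * B) := by rw [hY1]
    _ = (Bd * B) * (Y * B) := by simp only [Matrix.mul_assoc]
    _ = (Bd * B)ᵀ * (Y * B)ᵀ := by rw [h4, hYBsym]
    _ = (Bᵀ * Bdᵀ * Bᵀ) * Yᵀ := by
          simp only [Matrix.transpose_mul, Matrix.mul_assoc]
    _ = (B * Bd * B)ᵀ * Yᵀ := by
          simp only [Matrix.transpose_mul, hBsym, Matrix.mul_assoc]
    _ = Bᵀ * Yᵀ := by rw [h1]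
    _ = (Y * B)ᵀ := by rw [Matrix.transpose_mul]
    _ = Y * B := hYBsym
  have hBdsym : Bdᵀ = Bd := by
    rw [← hYdef]
    calc Y = Y * B * Y := hY2.symm
    _ = (Y * B) * Y := rfl
    _ = (Bd * B) * Y := by rw [step2]
    _ = Bd * (B * Y) := by rw [Matrix.mul_assoc]
    _ = Bd * (B * Bd) := by rw [step1]
    _ = Bd * B * Bd := by rw [Matrix.mul_assoc]
    _ = Bd := h2
  -- square root
  set S : Matrix (Fin d) (Fin d) ℝ := (open scoped MatrixOrder in CFC.sqrt A) with hSdef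
  have hSS : S * S = A := by open scoped MatrixOrder in exact CFC.sqrt_mul_sqrt_self A hA.nonneg
  have hSsym : Sᵀ = S := by
    have h : Sᴴ = S := by open scoped MatrixOrder in exact (CFC.sqrt_nonneg A).posSemidef.isHermitian.eq
    rwa [Matrix.conjTranspose_eq_transpose_of_trivial] at h
  clear_value S
  set Pp : Matrix (Fin d) (Fin d) ℝ := S * W * Bd * Wᵀ * S with hPdef
  have hPsym : Ppᵀ = Pp := by
    simp only [hPdef, Matrix.transpose_mul, Matrix.transpose_transpose, hSsym, hBdsym,
      Matrix.mul_assoc]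
  have hkey : Wᵀ * (S * (S * W)) = B := by
    rw [hBdef, ← hSS]; simp only [Matrix.mul_assoc]
  have hPidem : Pp * Pp = Pp := by
    calc Pp * Pp = S * (W * (Bd * ((Wᵀ * (S * (S * W))) * (Bd * (Wᵀ * S))))) := by
          simp only [hPdef, Matrix.mul_assoc]
    _ = S * (W * (Bd * (B * (Bd * (Wᵀ * S))))) := by rw [hkey]
    _ = S * (W * ((Bd * B * Bd) * (Wᵀ * S))) := by simp only [Matrix.mul_assoc]
    _ = Pp := by rw [h2, hPdef]; simp only [Matrix.mul_assoc]
  have hProj : (1 - Pp).PosSemidef := by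
    have h := Matrix.posSemidef_conjTranspose_mul_self (1 - Pp)
    have e : (1 - Pp)ᴴ * (1 - Pp) = 1 - Pp := by
      rw [Matrix.conjTranspose_eq_transpose_of_trivial, Matrix.transpose_sub,
        Matrix.transpose_one, hPsym, Matrix.sub_mul, Matrix.mul_sub, Matrix.mul_sub, hPidem]
      simp
    rwa [e] at h
  have hAP : (A - A * W * Bd * Wᵀ * A).PosSemidef := by
    have h := hProj.conjTranspose_mul_mul_same S
    have e : Sᴴ * (1 - Pp) * S = A - A * W * Bd * Wᵀ * A := by
      rw [Matrix.conjTranspose_eq_transpose_of_trivial, hSsym, Matrix.mul_sub,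
        Matrix.sub_mul, Matrix.mul_one]
      have hs : S * Pp * S = A * W * Bd * Wᵀ * A := by
        calc S * Pp * S = (S * S) * W * Bd * Wᵀ * (S * S) := by
              simp only [hPdef, Matrix.mul_assoc]
        _ = A * W * Bd * Wᵀ * A := by rw [hSS]
      rw [hSS, hs]
    rwa [e] at h
  have hfin : (Wtᵀ * (A - A * W * Bd * Wᵀ * A) * Wt).PosSemidef := by
    have h := hAP.conjTranspose_mul_mul_same Wt
    rwa [Matrix.conjTranspose_eq_transpose_of_trivial] at h
  have htr := psd_trace_nonneg hfin
  have e : Wtᵀ * (A - A * W * Bd * Wᵀ * A) * Wt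
      = Wtᵀ * A * Wt - Wtᵀ * (A * W * Bd * Wᵀ * A) * Wt := by
    rw [Matrix.mul_sub, Matrix.sub_mul]
  rw [e, Matrix.trace_sub] at htr
  linarith
end

section
/- Let d, m, k be positive integers with m ≤ k ≤ d, let A ∈ ℝ^{d×d} be symmetric positive semidefinite with Tr(A) > 0, and let A_m be its best rank-m approximation obtained by truncating the spectral decomposition. Let W_m ∈ F(d,m,k) be a maximizer of Tr(Wᵀ A_m W) over F(d,m,k) and let W_* ∈ F(d,m,k) be a maximizer of Tr(Wᵀ A W) over F(d,m,k). Then (1 − ε) · Tr(W_*ᵀ A W_*) ≤ Tr(W_mᵀ A W_m) ≤ Tr(W_*ᵀ A W_*), where ε = min{ d·G₁/k, d·G₂/m }, with r = min{rank(A), 2m}, G₁ = (∑_{i=m+1}^{r} λ_i(A)) / (∑_{i=1}^{m} λ_i(A)), and G₂ = (∑_{i=m+1}^{r} λ_i(A)) / (∑_{i=1}^{d} λ_i(A)). -/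
open Matrix


lemma trace_form {d mm : ℕ} (s : Finset (Fin d)) (μ : Fin d → ℝ) (u : Fin d → Fin d → ℝ)
    (W : Matrix (Fin d) (Fin mm) ℝ) :
    (Wᵀ * (∑ i ∈ s, μ i • vecMulVec (u i) (u i)) * W).trace
      = ∑ i ∈ s, μ i * ∑ c, (∑ j, u i j * W j c) ^ 2 := by
  rw [Matrix.mul_sum, Matrix.sum_mul, Matrix.trace_sum]
  refine Finset.sum_congr rfl fun i _ => ?_
  rw [Matrix.mul_smul, Matrix.smul_mul, Matrix.trace_smul, smul_eq_mul]
  congr 1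
  simp only [Matrix.trace, Matrix.diag, Matrix.mul_apply, Matrix.transpose_apply,
    vecMulVec_apply]
  refine Finset.sum_congr rfl fun c _ => ?_
  rw [sq, Finset.sum_mul_sum]
  simp only [Finset.sum_mul]
  refine Finset.sum_congr rfl fun j _ => Finset.sum_congr rfl fun l _ => by ring

lemma col_orth {d : ℕ} (u : Fin d → Fin d → ℝ)
    (hu : ∀ i j : Fin d, u i ⬝ᵥ u j = if i = j then 1 else 0) :
    ∀ j l : Fin d, (∑ i, u i j * u i l) = if j = l then (1:ℝ) else 0 := by
  have h1 : (Matrix.of u) * (Matrix.of u)ᵀ = 1 := by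
    ext i j
    simpa [Matrix.mul_apply, Matrix.one_apply, dotProduct] using hu i j
  have h2 : (Matrix.of u)ᵀ * (Matrix.of u) = 1 := (mul_eq_one_comm).1 h1
  intro j l
  have := congrFun (congrFun h2 j) l
  simpa [Matrix.mul_apply, Matrix.one_apply] using this

lemma s_total {d mm : ℕ} (u : Fin d → Fin d → ℝ)
    (hu : ∀ i j : Fin d, u i ⬝ᵥ u j = if i = j then 1 else 0)
    (W : Matrix (Fin d) (Fin mm) ℝ) (hW : Wᵀ * W = 1) :
    ∑ i, ∑ c, (∑ j, u i j * W j c) ^ 2 = (mm : ℝ) := by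
  have hcol := col_orth u hu
  rw [Finset.sum_comm]
  have hc : ∀ c : Fin mm, ∑ i, (∑ j, u i j * W j c) ^ 2 = ∑ j, W j c * W j c := by
    intro c
    calc ∑ i, (∑ j, u i j * W j c) ^ 2
        = ∑ i, ∑ j, ∑ l, W j c * W l c * (u i j * u i l) := by
          refine Finset.sum_congr rfl fun i _ => ?_
          rw [sq, Finset.sum_mul_sum]
          exact Finset.sum_congr rfl fun j _ => Finset.sum_congr rfl fun l _ => by ring
      _ = ∑ j, ∑ l, W j c * W l c * (∑ i, u i j * u i l) := by
          rw [Finset.sum_comm]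
          refine Finset.sum_congr rfl fun j _ => ?_
          rw [Finset.sum_comm]
          refine Finset.sum_congr rfl fun l _ => ?_
          rw [Finset.mul_sum]
      _ = ∑ j, W j c * W j c := by
          refine Finset.sum_congr rfl fun j _ => ?_
          simp [hcol, Finset.mul_sum, Finset.sum_ite_eq]
  calc ∑ c, ∑ i, (∑ j, u i j * W j c) ^ 2 = ∑ c, ∑ j, W j c * W j c :=
        Finset.sum_congr rfl fun c _ => hc c
    _ = (Wᵀ * W).trace := by
        simp [Matrix.trace, Matrix.diag, Matrix.mul_apply, Matrix.transpose_apply]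
    _ = (mm : ℝ) := by rw [hW]; simp [Matrix.trace_one]

lemma s_le_one {d mm : ℕ} (W : Matrix (Fin d) (Fin mm) ℝ) (hW : Wᵀ * W = 1)
    (x : Fin d → ℝ) (hx : ∑ j, x j * x j = 1) :
    ∑ c, (∑ j, x j * W j c) ^ 2 ≤ 1 := by
  set y : Fin mm → ℝ := fun c => ∑ j, x j * W j c with hy
  set z : Fin d → ℝ := fun j => ∑ c, W j c * y c with hz
  have hWe : ∀ c c' : Fin mm, (∑ j, W j c * W j c') = if c = c' then (1:ℝ) else 0 := by
    intro c c'
    have := congrFun (congrFun hW c) c'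
    simpa [Matrix.mul_apply, Matrix.one_apply] using this
  have h1 : ∑ c, y c ^ 2 = ∑ j, x j * z j := by
    simp only [hz, Finset.mul_sum]
    rw [Finset.sum_comm]
    refine Finset.sum_congr rfl fun c _ => ?_
    rw [sq, hy]
    simp only [Finset.sum_mul]
    refine Finset.sum_congr rfl fun j _ => by ring
  have h2 : ∑ j, z j ^ 2 = ∑ c, y c ^ 2 := by
    calc ∑ j, z j ^ 2 = ∑ j, ∑ c, ∑ c', y c * y c' * (W j c * W j c') := by
          refine Finset.sum_congr rfl fun j _ => ?_
          rw [sq, hz, Finset.sum_mul_sum]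
          exact Finset.sum_congr rfl fun c _ => Finset.sum_congr rfl fun c' _ => by ring
      _ = ∑ c, ∑ c', y c * y c' * (∑ j, W j c * W j c') := by
          rw [Finset.sum_comm]
          refine Finset.sum_congr rfl fun c _ => ?_
          rw [Finset.sum_comm]
          exact Finset.sum_congr rfl fun c' _ => (Finset.mul_sum _ _ _).symm
      _ = ∑ c, y c ^ 2 := by
          refine Finset.sum_congr rfl fun c _ => ?_
          simp [hWe, Finset.mul_sum, Finset.sum_ite_eq, sq]
  have hCS : (∑ j, x j * z j) ^ 2 ≤ (∑ j, x j ^ 2) * ∑ j, z j ^ 2 :=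
    Finset.sum_mul_sq_le_sq_mul_sq _ _ _
  have hx2 : ∑ j, x j ^ 2 = 1 := by simpa [sq] using hx
  have hykey : (∑ c, y c ^ 2) ^ 2 ≤ ∑ c, y c ^ 2 := by
    calc (∑ c, y c ^ 2) ^ 2 = (∑ j, x j * z j) ^ 2 := by rw [h1]
      _ ≤ (∑ j, x j ^ 2) * ∑ j, z j ^ 2 := hCS
      _ = ∑ c, y c ^ 2 := by rw [hx2, h2, one_mul]
  nlinarith [Finset.sum_nonneg fun c (_ : c ∈ Finset.univ) => sq_nonneg (y c)]

/-- there is an injective choice of `k` indices capturing at least `k/d` of the total sum -/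
lemma top_select {d : ℕ} (k : ℕ) (hk0 : 0 < k) (hkd : k ≤ d) (g : Fin d → ℝ) :
    ∃ σ : Fin k → Fin d, Function.Injective σ ∧
      (k : ℝ) * ∑ i, g i ≤ (d : ℝ) * ∑ a, g (σ a) := by
  classical
  have hd0 : 0 < d := lt_of_lt_of_le hk0 hkd
  set π := Tuple.sort g with hπ
  have hmono : Monotone (g ∘ π) := Tuple.monotone_sort g
  set e : Fin k → Fin d := fun a => ⟨d - k + a.1, by omega⟩ with he
  have heinj : Function.Injective e := by
    intro a b hab
    have : d - k + a.1 = d - k + b.1 := congrArg Fin.val hab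
    exact Fin.ext (by omega)
  refine ⟨π ∘ e, (Equiv.injective π).comp heinj, ?_⟩
  set H : ℕ → ℝ := fun n => if hn : n < d then g (π ⟨n, hn⟩) else 0 with hH
  have hHmono : ∀ a b : ℕ, a ≤ b → b < d → H a ≤ H b := by
    intro a b hab hbd
    have had : a < d := lt_of_le_of_lt hab hbd
    simp only [hH, dif_pos had, dif_pos hbd]
    exact hmono (show (⟨a, had⟩ : Fin d) ≤ ⟨b, hbd⟩ from hab)
  have h1 : ∑ i, g i = ∑ n ∈ Finset.range d, H n := by
    rw [← (Equiv.sum_comp π g)]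
    rw [Fin.sum_univ_eq_sum_range (fun n => H n) d |>.symm]
    refine Finset.sum_congr rfl fun i _ => ?_
    simp [hH, i.2]
  have h2 : ∑ a, g ((π ∘ e) a) = ∑ n ∈ Finset.Ico (d - k) d, H n := by
    have e1 : ∑ a : Fin k, g ((π ∘ e) a) = ∑ a : Fin k, H (d - k + a.1) := by
      refine Finset.sum_congr rfl fun a _ => ?_
      simp only [hH, Function.comp]
      rw [dif_pos (by omega : d - k + a.1 < d)]
    have e3 : d - (d - k) = k := by omega
    rw [e1, Fin.sum_univ_eq_sum_range (fun n => H (d - k + n)) k,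
      Finset.sum_Ico_eq_sum_range, e3]
  rw [h1, h2]
  have hsplit : ∑ n ∈ Finset.range d, H n
      = ∑ n ∈ Finset.range (d - k), H n + ∑ n ∈ Finset.Ico (d - k) d, H n := by
    rw [Finset.range_eq_Ico, ← Finset.sum_Ico_consecutive _ (Nat.zero_le (d - k)) (by omega), Finset.range_eq_Ico]
  rw [hsplit]
  have hdk : d - k < d := by omega
  set c := H (d - k) with hc
  have hA : ∑ n ∈ Finset.range (d - k), H n ≤ (d - k : ℕ) * c := by
    calc ∑ n ∈ Finset.range (d - k), H n ≤ ∑ _n ∈ Finset.range (d - k), c :=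
          Finset.sum_le_sum fun n hn => hHmono n (d - k)
            (le_of_lt (Finset.mem_range.1 hn)) hdk
      _ = (d - k : ℕ) * c := by rw [Finset.sum_const, Finset.card_range]; simp
  have hB : (k : ℝ) * c ≤ ∑ n ∈ Finset.Ico (d - k) d, H n := by
    calc (k : ℝ) * c = ∑ _n ∈ Finset.Ico (d - k) d, c := by
          rw [Finset.sum_const, Nat.card_Ico]
          have : d - (d - k) = k := by omega
          rw [this]; simp
      _ ≤ ∑ n ∈ Finset.Ico (d - k) d, H n :=
          Finset.sum_le_sum fun n hn => by
            have := Finset.mem_Ico.1 hn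
            exact hHmono (d - k) n this.1 this.2
  have hcast : ((d - k : ℕ) : ℝ) = (d : ℝ) - k := by
    have : (k : ℝ) ≤ d := by exact_mod_cast hkd
    rw [Nat.cast_sub hkd]
  set X := ∑ n ∈ Finset.range (d - k), H n
  set Y := ∑ n ∈ Finset.Ico (d - k) d, H n
  rw [hcast] at hA
  nlinarith [hA, hB, sq_nonneg ((d:ℝ) - k)]

lemma filter_eq_map {d a b : ℕ} (hab : a ≤ b) (hbd : b ≤ d) :
    Finset.univ.filter (fun i : Fin d => a ≤ (i : ℕ) ∧ (i : ℕ) < b)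
      = Finset.univ.map ⟨fun x : Fin (b - a) => (⟨a + x.1, by omega⟩ : Fin d),
          fun x y hxy => by
            have : a + x.1 = a + y.1 := congrArg Fin.val hxy
            exact Fin.ext (by omega)⟩ := by
  ext i
  simp only [Finset.mem_filter, Finset.mem_univ, true_and, Finset.mem_map,
    Function.Embedding.coeFn_mk]
  constructor
  · rintro ⟨h1, h2⟩
    exact ⟨⟨i.1 - a, by omega⟩, Fin.ext (by show a + (i.1 - a) = i.1; omega)⟩
  · rintro ⟨x, rfl⟩
    exact ⟨show a ≤ a + x.1 by omega, show a + x.1 < b by omega⟩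

lemma filter_lt_eq_map {d b : ℕ} (hbd : b ≤ d) :
    Finset.univ.filter (fun i : Fin d => (i : ℕ) < b)
      = Finset.univ.map ⟨fun x : Fin b => (⟨x.1, by omega⟩ : Fin d),
          fun x y hxy => by simpa [Fin.ext_iff] using hxy⟩ := by
  ext i
  simp only [Finset.mem_filter, Finset.mem_univ, true_and, Finset.mem_map,
    Function.Embedding.coeFn_mk]
  constructor
  · intro h1
    exact ⟨⟨i.1, h1⟩, Fin.ext rfl⟩
  · rintro ⟨x, rfl⟩
    exact x.2

/-- build a feasible matrix from an injection `σ` and an orthonormal family `y`. -/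
lemma witness_builder {d mm q : ℕ} (σ : Fin q → Fin d) (hσ : Function.Injective σ)
    (y : Fin mm → Fin q → ℝ)
    (hy : ∀ c c' : Fin mm, (∑ a, y c a * y c' a) = if c = c' then (1:ℝ) else 0) :
    ∃ W : Matrix (Fin d) (Fin mm) ℝ,
      (Wᵀ * W = 1 ∧ {i | W i ≠ 0}.ncard ≤ q) ∧
      ∀ M : Matrix (Fin d) (Fin d) ℝ,
        (Wᵀ * M * W).trace = ∑ c, ∑ a, ∑ b, y c a * (M (σ a) (σ b) * y c b) := by
  classical
  set W : Matrix (Fin d) (Fin mm) ℝ :=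
    Matrix.of (fun j c => ∑ a, if j = σ a then y c a else 0) with hWdef
  have hWσ : ∀ a c, W (σ a) c = y c a := by
    intro a c
    simp only [hWdef, Matrix.of_apply]
    rw [Finset.sum_eq_single a]
    · simp
    · intro b _ hba
      rw [if_neg (fun h => hba (hσ h.symm))]
    · simp
  have hW0 : ∀ j, (∀ a, j ≠ σ a) → ∀ c, W j c = 0 := by
    intro j hj c
    simp only [hWdef, Matrix.of_apply]
    exact Finset.sum_eq_zero fun a _ => if_neg (hj a)
  -- sums over j reduce to sums over the image of σ
  have hsum : ∀ f : Fin d → ℝ, (∀ j, (∀ a, j ≠ σ a) → f j = 0) →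
      ∑ j, f j = ∑ a, f (σ a) := by
    intro f hf
    have hm := Finset.sum_map Finset.univ ⟨σ, hσ⟩ f
    simp only [Function.Embedding.coeFn_mk] at hm
    rw [← hm]
    refine (Finset.sum_subset (Finset.subset_univ _) ?_).symm
    intro j _ hj
    refine hf j fun a haj => hj ?_
    simp only [Finset.mem_map, Function.Embedding.coeFn_mk]
    exact ⟨a, Finset.mem_univ a, haj.symm⟩
  refine ⟨W, ⟨?_, ?_⟩, ?_⟩
  · ext c c'
    simp only [Matrix.mul_apply, Matrix.transpose_apply, Matrix.one_apply]
    rw [hsum (fun j => W j c * W j c') (fun j hj => by simp [hW0 j hj c])]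
    simp only [hWσ]
    exact hy c c'
  · have hsub : {i | W i ≠ 0} ⊆ Set.range σ := by
      intro j hj
      by_contra hjr
      refine hj (funext fun c => hW0 j (fun a haj => hjr ⟨a, haj.symm⟩) c)
    calc {i | W i ≠ 0}.ncard ≤ (Set.range σ).ncard :=
          Set.ncard_le_ncard hsub (Set.finite_range σ)
      _ ≤ q := by
          rw [← Set.image_univ]
          calc (σ '' Set.univ).ncard ≤ (Set.univ : Set (Fin q)).ncard :=
                Set.ncard_image_le Set.finite_univ
            _ = q := by rw [Set.ncard_univ]; simp
  · intro M
    simp only [Matrix.trace, Matrix.diag, Matrix.mul_apply, Matrix.transpose_apply]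
    refine Finset.sum_congr rfl fun c _ => ?_
    rw [hsum (fun l => (∑ j, W j c * M j l) * W l c)
      (fun l hl => by simp [hW0 l hl c])]
    rw [Finset.sum_comm]
    refine Finset.sum_congr rfl fun a _ => ?_
    have hb : ∀ b : Fin q, (∑ j, W j c * M j (σ b)) * W (σ b) c
        = ∑ a', y c a' * (M (σ a') (σ b) * y c b) := by
      intro b
      rw [hWσ, Finset.sum_mul, hsum (fun j => W j c * M j (σ b) * y c b)
        (fun j hj => by simp [hW0 j hj c])]
      exact Finset.sum_congr rfl fun a' _ => by rw [hWσ]; ring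
    rw [hb]

lemma herm_trace_eq_sum_eigs {k : ℕ} (C : Matrix (Fin k) (Fin k) ℝ) (hC : C.IsHermitian) :
    C.trace = ∑ i, hC.eigenvalues i := by
  have hspec := hC.spectral_theorem
  calc C.trace = ((hC.eigenvectorUnitary : Matrix (Fin k) (Fin k) ℝ) *
        (diagonal (RCLike.ofReal ∘ hC.eigenvalues)) *
        (star (hC.eigenvectorUnitary : Matrix (Fin k) (Fin k) ℝ))).trace := congrArg Matrix.trace hspec
    _ = ((star (hC.eigenvectorUnitary : Matrix (Fin k) (Fin k) ℝ)) *
        ((hC.eigenvectorUnitary : Matrix (Fin k) (Fin k) ℝ) *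
        (diagonal (RCLike.ofReal ∘ hC.eigenvalues)))).trace := by
        rw [Matrix.trace_mul_comm]
    _ = (diagonal (RCLike.ofReal ∘ hC.eigenvalues)).trace := by
        rw [← Matrix.mul_assoc]
        have h1 : (star (hC.eigenvectorUnitary : Matrix (Fin k) (Fin k) ℝ)) *
            (hC.eigenvectorUnitary : Matrix (Fin k) (Fin k) ℝ) = 1 :=
          hC.eigenvectorUnitary.2.1
        rw [h1, Matrix.one_mul]
    _ = ∑ i, hC.eigenvalues i := by
        rw [Matrix.trace_diagonal]
        simp

lemma submatrix_eigs {k mm : ℕ} (hmk : mm ≤ k) (C : Matrix (Fin k) (Fin k) ℝ)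
    (hC : C.IsHermitian) (hrank : C.rank ≤ mm) :
    ∃ y : Fin mm → Fin k → ℝ,
      (∀ c c' : Fin mm, (∑ a, y c a * y c' a) = if c = c' then (1:ℝ) else 0) ∧
      ∑ c, ∑ a, ∑ b, y c a * (C a b * y c b) = C.trace := by
  classical
  set v := hC.eigenvectorBasis with hv
  set γ := hC.eigenvalues with hγ
  have hon : ∀ i j : Fin k, (∑ a, v i a * v j a) = if i = j then (1:ℝ) else 0 := by
    intro i j
    have := (orthonormal_iff_ite.1 v.orthonormal) i j
    simpa [PiLp.inner_apply, RCLike.inner_apply, conj_trivial, mul_comm] using this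
  have hquad : ∀ j : Fin k, (∑ a, ∑ b, v j a * (C a b * v j b)) = γ j := by
    intro j
    have hmv' : ∀ a, (∑ b, C a b * v j b) = γ j * v j a := by
      intro a
      have := congrFun (hC.mulVec_eigenvectorBasis j) a
      simpa [Matrix.mulVec, dotProduct] using this
    calc (∑ a, ∑ b, v j a * (C a b * v j b)) = ∑ a, γ j * (v j a * v j a) := by
          refine Finset.sum_congr rfl fun a _ => ?_
          rw [← Finset.mul_sum, hmv' a]
          ring
      _ = γ j := by rw [← Finset.mul_sum, hon j j, if_pos rfl, mul_one]
  set J : Finset (Fin k) := Finset.univ.filter (fun i => γ i ≠ 0) with hJ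
  have hJcard : J.card ≤ mm := by
    have h1 : C.rank = Fintype.card {i // γ i ≠ 0} := hC.rank_eq_card_non_zero_eigs
    have h2 : Fintype.card {i // γ i ≠ 0} = J.card := by
      rw [hJ, Fintype.card_subtype]
    omega
  obtain ⟨J', hJJ', hJ'card⟩ := Finset.exists_superset_card_eq hJcard
    (by simpa using hmk)
  set τ0 : Fin mm ≃ J' := (Finset.equivFinOfCardEq hJ'card).symm with hτ0
  set τ : Fin mm → Fin k := fun c => (τ0 c : Fin k) with hτ
  have hτinj : Function.Injective τ :=
    Subtype.val_injective.comp τ0.injective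
  refine ⟨fun c a => v (τ c) a, ?_, ?_⟩
  · intro c c'
    show (∑ a, v (τ c) a * v (τ c') a) = _
    rw [hon]
    by_cases h : c = c'
    · simp [h]
    · rw [if_neg (fun he => h (hτinj he)), if_neg h]
  · have hγ0 : ∀ x : Fin k, x ∉ J' → γ x = 0 := by
      intro x hx
      by_contra h0
      exact hx (hJJ' (by simp [hJ, h0]))
    show (∑ c, ∑ a, ∑ b, v (τ c) a * (C a b * v (τ c) b)) = C.trace
    calc ∑ c, ∑ a, ∑ b, v (τ c) a * (C a b * v (τ c) b) = ∑ c, γ (τ c) :=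
          Finset.sum_congr rfl fun c _ => hquad (τ c)
      _ = ∑ x ∈ J', γ x := by
          rw [← Finset.sum_attach J' (fun x => γ x)]
          exact (Equiv.sum_comp τ0 (fun x : J' => γ x)).symm ▸ rfl
      _ = ∑ x, γ x := Finset.sum_subset (Finset.subset_univ J') ?_
      _ = C.trace := (herm_trace_eq_sum_eigs C hC).symm
    intro x _ hx
    exact hγ0 x hx

lemma div_bound {S P O dd kk : ℝ} (hS : 0 ≤ S) (hP : 0 < P) (hk : 0 < kk)
    (h : kk * P ≤ dd * O) : S ≤ dd * (S / P) / kk * O := by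
  have h1 : dd * (S / P) / kk * O = S * ((dd * O) / (kk * P)) := by
    field_simp
  rw [h1]
  refine le_mul_of_one_le_right hS ?_
  rw [one_le_div (by positivity)]
  exact h

lemma eig_equation {d : ℕ} (u : Fin d → Fin d → ℝ) (μ : Fin d → ℝ)
    (hu : ∀ i j : Fin d, u i ⬝ᵥ u j = if i = j then 1 else 0)
    (A : Matrix (Fin d) (Fin d) ℝ)
    (hdec : A = ∑ i : Fin d, μ i • vecMulVec (u i) (u i)) :
    ∀ j, A *ᵥ u j = μ j • u j := by
  intro j
  funext x
  have hA : ∀ x y, A x y = ∑ i, μ i * (u i x * u i y) := by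
    intro x y
    rw [hdec]
    simp [Matrix.sum_apply, vecMulVec_apply]
  calc (A *ᵥ u j) x = ∑ y, (∑ i, μ i * (u i x * u i y)) * u j y := by
        simp only [Matrix.mulVec, dotProduct, hA]
    _ = ∑ i, μ i * u i x * (∑ y, u i y * u j y) := by
        simp only [Finset.sum_mul]
        rw [Finset.sum_comm]
        refine Finset.sum_congr rfl fun i _ => ?_
        rw [Finset.mul_sum]
        exact Finset.sum_congr rfl fun y _ => by ring
    _ = ∑ i, μ i * u i x * (if i = j then 1 else 0) := by
        refine Finset.sum_congr rfl fun i _ => ?_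
        rw [show (∑ y, u i y * u j y) = u i ⬝ᵥ u j from rfl, hu i j]
    _ = μ j * u j x := by simp [Finset.sum_ite_eq]
    _ = (μ j • u j) x := by simp

lemma rank_ge_of_eigs {d : ℕ} (A : Matrix (Fin d) (Fin d) ℝ)
    (u : Fin d → Fin d → ℝ) (μ : Fin d → ℝ)
    (hu : ∀ i j : Fin d, u i ⬝ᵥ u j = if i = j then 1 else 0)
    (hAu : ∀ j, A *ᵥ u j = μ j • u j)
    (n : ℕ) (hnd : n ≤ d) (hnz : ∀ j : Fin d, j.1 < n → μ j ≠ 0) :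
    n ≤ A.rank := by
  classical
  set e : Fin n → Fin d := fun j => ⟨j.1, lt_of_lt_of_le j.2 hnd⟩ with he
  have heinj : Function.Injective e := by
    intro a b hab
    have : (e a).1 = (e b).1 := by rw [hab]
    exact Fin.ext this
  have hlin0 : LinearIndependent ℝ (fun j : Fin n => u (e j)) := by
    rw [Fintype.linearIndependent_iff]
    intro g hsum j0
    have h0 := congrArg (fun w => w ⬝ᵥ u (e j0)) hsum
    have hdsum : (∑ i : Fin n, g i • u (e i)) ⬝ᵥ u (e j0)
        = ∑ i, g i * (u (e i) ⬝ᵥ u (e j0)) := by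
      simp only [dotProduct, Finset.sum_apply, Pi.smul_apply, smul_eq_mul, Finset.sum_mul]
      rw [Finset.sum_comm]
      refine Finset.sum_congr rfl fun i _ => ?_
      rw [Finset.mul_sum]
      exact Finset.sum_congr rfl fun y _ => by ring
    simp only [hdsum, zero_dotProduct] at h0
    rw [Finset.sum_eq_single j0] at h0
    · rw [hu] at h0
      simpa using h0
    · intro b _ hb
      rw [hu, if_neg (fun h => hb (heinj h)), mul_zero]
    · simp
  set f : Fin n → LinearMap.range A.mulVecLin := fun j =>
    ⟨u (e j), ⟨(μ (e j))⁻¹ • u (e j), by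
      simp only [Matrix.mulVecLin_apply, Matrix.mulVec_smul, hAu]
      rw [smul_smul, inv_mul_cancel₀ (hnz (e j) j.2), one_smul]⟩⟩ with hf
  have hlin : LinearIndependent ℝ f := by
    apply LinearIndependent.of_comp (LinearMap.range A.mulVecLin).subtype
    exact hlin0
  have := hlin.fintype_card_le_finrank
  simpa [Matrix.rank] using this

set_option maxHeartbeats 2000000 in
/-- approximation guarantee: given a spectral decomposition
`A = ∑ᵢ μᵢ uᵢ uᵢᵀ` with orthonormal `u` and non-increasing `μ` (so `μᵢ = λᵢ(A)`),
let `Am = ∑_{i<m} μᵢ uᵢ uᵢᵀ` be the best rank-`m` approximation. If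
`Wm` maximizes `Tr(Wᵀ Am W)` over `F(d,m,k)` and `Ws` maximizes `Tr(Wᵀ A W)`
over `F(d,m,k)`, then `(1-ε)·Tr(Wsᵀ A Ws) ≤ Tr(Wmᵀ A Wm) ≤ Tr(Wsᵀ A Ws)` with
`ε = min(d·G₁/k, d·G₂/m)`, `r = min(rank A, 2m)`,
`G₁ = (∑_{m<i≤r} λᵢ)/(∑_{i≤m} λᵢ)` and `G₂ = (∑_{m<i≤r} λᵢ)/(∑_{i≤d} λᵢ)`. -/
theorem go_low_rank_approximation_guarantee (d m k : ℕ) (hm : 0 < m) (hmk : m ≤ k)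
    (hkd : k ≤ d)
    (A : Matrix (Fin d) (Fin d) ℝ) (hA : A.PosSemidef) (htr : 0 < A.trace)
    (u : Fin d → Fin d → ℝ) (μ : Fin d → ℝ)
    (hu : ∀ i j : Fin d, u i ⬝ᵥ u j = if i = j then 1 else 0)
    (hμ : Antitone μ)
    (hdec : A = ∑ i : Fin d, μ i • vecMulVec (u i) (u i))
    (Am : Matrix (Fin d) (Fin d) ℝ)
    (hAm : Am = ∑ i ∈ Finset.univ.filter (fun i : Fin d => (i : ℕ) < m),
      μ i • vecMulVec (u i) (u i))
    (r : ℕ) (hr : r = min A.rank (2 * m))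
    (G₁ G₂ ε : ℝ)
    (hG₁ : G₁ = (∑ i ∈ Finset.univ.filter (fun i : Fin d => m ≤ (i : ℕ) ∧ (i : ℕ) < r), μ i)
      / (∑ i ∈ Finset.univ.filter (fun i : Fin d => (i : ℕ) < m), μ i))
    (hG₂ : G₂ = (∑ i ∈ Finset.univ.filter (fun i : Fin d => m ≤ (i : ℕ) ∧ (i : ℕ) < r), μ i)
      / (∑ i : Fin d, μ i))
    (hε : ε = min ((d : ℝ) * G₁ / k) ((d : ℝ) * G₂ / m))
    (Wm Ws : Matrix (Fin d) (Fin m) ℝ)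
    (hWm : feasible d m k Wm) (hWs : feasible d m k Ws)
    (hWmmax : ∀ W : Matrix (Fin d) (Fin m) ℝ, feasible d m k W →
      (Wᵀ * Am * W).trace ≤ (Wmᵀ * Am * Wm).trace)
    (hWsmax : ∀ W : Matrix (Fin d) (Fin m) ℝ, feasible d m k W →
      (Wᵀ * A * W).trace ≤ (Wsᵀ * A * Ws).trace) :
    (1 - ε) * (Wsᵀ * A * Ws).trace ≤ (Wmᵀ * A * Wm).trace ∧
      (Wmᵀ * A * Wm).trace ≤ (Wsᵀ * A * Ws).trace := by
  classical
  have hk0 : 0 < k := lt_of_lt_of_le hm hmk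
  have hd0 : 0 < d := lt_of_lt_of_le hk0 hkd
  have hmd : m ≤ d := le_trans hmk hkd
  have hWso : Wsᵀ * Ws = 1 := hWs.1
  have hWsk : {i | Ws i ≠ 0}.ncard ≤ k := hWs.2
  -- the quadratic weights
  set sfun : Matrix (Fin d) (Fin m) ℝ → Fin d → ℝ :=
    fun W i => ∑ c, (∑ j, u i j * W j c) ^ 2 with hsfun
  have htrA : ∀ W : Matrix (Fin d) (Fin m) ℝ,
      (Wᵀ * A * W).trace = ∑ i, μ i * sfun W i := by
    intro W; rw [hdec]; exact trace_form _ μ u W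
  have htrAm : ∀ W : Matrix (Fin d) (Fin m) ℝ,
      (Wᵀ * Am * W).trace
        = ∑ i ∈ Finset.univ.filter (fun i : Fin d => (i : ℕ) < m), μ i * sfun W i := by
    intro W; rw [hAm]; exact trace_form _ μ u W
  have hsnn : ∀ (W : Matrix (Fin d) (Fin m) ℝ) i, 0 ≤ sfun W i :=
    fun W i => Finset.sum_nonneg fun c _ => sq_nonneg _
  have huu : ∀ i, (∑ j, u i j * u i j) = 1 := by
    intro i
    have := hu i i
    simpa [dotProduct] using this
  have hAu := eig_equation u μ hu A hdec
  have hμnn : ∀ i, 0 ≤ μ i := by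
    intro i
    have h1 := hA.dotProduct_mulVec_nonneg (u i)
    rw [hAu i] at h1
    have h2 : star (u i) = u i := by
      funext x; simp
    rw [h2] at h1
    have h3 : u i ⬝ᵥ (μ i • u i) = μ i := by
      rw [dotProduct_smul, smul_eq_mul, hu i i, if_pos rfl, mul_one]
    rwa [h3] at h1
  have htrace : A.trace = ∑ i, μ i := by
    rw [hdec, Matrix.trace_sum]
    refine Finset.sum_congr rfl fun i _ => ?_
    rw [Matrix.trace_smul, smul_eq_mul]
    have : (vecMulVec (u i) (u i)).trace = ∑ x, u i x * u i x := by
      simp [Matrix.trace, Matrix.diag, vecMulVec_apply]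
    rw [this, huu i, mul_one]
  have htraceAm : Am.trace
      = ∑ i ∈ Finset.univ.filter (fun i : Fin d => (i : ℕ) < m), μ i := by
    rw [hAm, Matrix.trace_sum]
    refine Finset.sum_congr rfl fun i _ => ?_
    rw [Matrix.trace_smul, smul_eq_mul]
    have : (vecMulVec (u i) (u i)).trace = ∑ x, u i x * u i x := by
      simp [Matrix.trace, Matrix.diag, vecMulVec_apply]
    rw [this, huu i, mul_one]
  have hμ0 : ∀ i : Fin d, A.rank ≤ (i : ℕ) → μ i = 0 := by
    intro i hi
    by_contra h0
    have hipos : 0 < μ i := lt_of_le_of_ne (hμnn i) (Ne.symm h0)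
    have hpos : ∀ j : Fin d, (j : ℕ) < i.1 + 1 → μ j ≠ 0 := by
      intro j hj
      have hji : j ≤ i := by
        rw [Fin.le_def]; omega
      have := hμ hji
      linarith
    have := rank_ge_of_eigs A u μ hu hAu (i.1 + 1) i.2 hpos
    omega
  set SN := ∑ i ∈ Finset.univ.filter (fun i : Fin d => m ≤ (i : ℕ) ∧ (i : ℕ) < r), μ i
    with hSN
  set SM := ∑ i ∈ Finset.univ.filter (fun i : Fin d => (i : ℕ) < m), μ i with hSM
  set TA := ∑ i : Fin d, μ i with hTA
  set OPT := (Wsᵀ * A * Ws).trace with hOPT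
  have hSNnn : 0 ≤ SN := Finset.sum_nonneg fun i _ => hμnn i
  have hTApos : 0 < TA := htrace ▸ htr
  have hμ0pos : 0 < μ ⟨0, hd0⟩ := by
    by_contra hcon
    push_neg at hcon
    have hall : ∀ i, μ i ≤ μ ⟨0, hd0⟩ := fun i => hμ (by
      rw [Fin.le_def]; exact Nat.zero_le _)
    have : TA ≤ ∑ _i : Fin d, μ ⟨0, hd0⟩ := Finset.sum_le_sum fun i _ => hall i
    rw [Finset.sum_const, Finset.card_univ, Fintype.card_fin, nsmul_eq_mul] at this
    nlinarith
  have hSMpos : 0 < SM := by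
    have hmem : (⟨0, hd0⟩ : Fin d) ∈ Finset.univ.filter (fun i : Fin d => (i : ℕ) < m) := by
      simp [hm]
    calc (0:ℝ) < μ ⟨0, hd0⟩ := hμ0pos
      _ ≤ SM := Finset.single_le_sum (fun i _ => hμnn i) hmem
  -- trace over A dominates trace over Am for every W
  have hdom : ∀ W : Matrix (Fin d) (Fin m) ℝ, (Wᵀ * Am * W).trace ≤ (Wᵀ * A * W).trace := by
    intro W
    rw [htrA, htrAm]
    rw [← Finset.sum_filter_add_sum_filter_not Finset.univ
      (fun i : Fin d => (i : ℕ) < m) (fun i => μ i * sfun W i)]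
    have : 0 ≤ ∑ i ∈ Finset.univ.filter (fun i : Fin d => ¬ (i : ℕ) < m),
        μ i * sfun W i :=
      Finset.sum_nonneg fun i _ => mul_nonneg (hμnn i) (hsnn W i)
    linarith
  -- witness bound 2 : m * TA ≤ d * OPT
  have hOPT2 : (m : ℝ) * TA ≤ (d : ℝ) * OPT := by
    obtain ⟨σ, hσinj, hσsum⟩ := top_select m hm hmd (fun i => A i i)
    have hy : ∀ c c' : Fin m,
        (∑ a, (if a = c then (1:ℝ) else 0) * (if a = c' then (1:ℝ) else 0))
          = if c = c' then (1:ℝ) else 0 := by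
      intro c c'
      have hterm : ∀ a : Fin m, (if a = c then (1:ℝ) else 0) * (if a = c' then (1:ℝ) else 0)
          = if a = c then (if a = c' then (1:ℝ) else 0) else 0 := by
        intro a
        by_cases ha : a = c <;> simp [ha]
      rw [Finset.sum_congr rfl fun a _ => hterm a,
        Finset.sum_ite_eq' Finset.univ c (fun a => if a = c' then (1:ℝ) else 0)]
      simp
    obtain ⟨W, ⟨hWo, hWk⟩, hWtr⟩ := witness_builder σ hσinj
      (fun c a => if a = c then (1:ℝ) else 0) hy
    have hfeas : feasible d m k W := ⟨hWo, le_trans hWk hmk⟩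
    have htrW : (Wᵀ * A * W).trace = ∑ c, A (σ c) (σ c) := by
      rw [hWtr A]
      refine Finset.sum_congr rfl fun c _ => ?_
      simp [Finset.sum_ite_eq', ite_mul, mul_ite]
    have hAtr : (∑ i, A i i) = TA := by
      rw [← htrace]; rfl
    calc (m : ℝ) * TA = (m : ℝ) * ∑ i, A i i := by rw [hAtr]
      _ ≤ (d : ℝ) * ∑ a, A (σ a) (σ a) := hσsum
      _ = (d : ℝ) * (Wᵀ * A * W).trace := by rw [htrW]
      _ ≤ (d : ℝ) * OPT := by
          have := hWsmax W hfeas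
          have hd : (0:ℝ) ≤ d := Nat.cast_nonneg d
          nlinarith
  -- witness bound 1 : k * SM ≤ d * OPT
  have hOPT1 : (k : ℝ) * SM ≤ (d : ℝ) * OPT := by
    obtain ⟨σ, hσinj, hσsum⟩ := top_select k hk0 hkd (fun i => Am i i)
    set C : Matrix (Fin k) (Fin k) ℝ := Matrix.of (fun a b => Am (σ a) (σ b)) with hC
    have hAmsym : ∀ x y, Am x y = Am y x := by
      intro x y
      rw [hAm]
      simp only [Matrix.sum_apply, Matrix.smul_apply, vecMulVec_apply, smul_eq_mul]
      exact Finset.sum_congr rfl fun i _ => by ring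
    have hCH : C.IsHermitian := by
      ext a b
      simp only [Matrix.conjTranspose_apply, hC, Matrix.of_apply, star_trivial]
      exact hAmsym (σ b) (σ a)
    have hCrank : C.rank ≤ m := by
      set emb : Fin m ↪ Fin d := ⟨fun x => (⟨x.1, by omega⟩ : Fin d),
        fun x y hxy => by simpa [Fin.ext_iff] using hxy⟩ with hemb
      set P : Matrix (Fin k) (Fin m) ℝ :=
        Matrix.of (fun a c => μ (emb c) * u (emb c) (σ a)) with hP
      set Q : Matrix (Fin m) (Fin k) ℝ :=
        Matrix.of (fun c b => u (emb c) (σ b)) with hQ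
      have hCPQ : C = P * Q := by
        ext a b
        simp only [hC, Matrix.of_apply, Matrix.mul_apply, hP, hQ, hAm,
          Matrix.sum_apply, Matrix.smul_apply, vecMulVec_apply, smul_eq_mul]
        rw [filter_lt_eq_map hmd, Finset.sum_map]
        refine Finset.sum_congr rfl fun c _ => by
          simp only [Function.Embedding.coeFn_mk, hemb]
          ring
      calc C.rank = (P * Q).rank := by rw [hCPQ]
        _ ≤ Q.rank := Matrix.rank_mul_le_right P Q
        _ ≤ Fintype.card (Fin m) := Matrix.rank_le_card_height Q
        _ = m := Fintype.card_fin m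
    obtain ⟨y, hy, hytr⟩ := submatrix_eigs hmk C hCH hCrank
    obtain ⟨W, ⟨hWo, hWk⟩, hWtr⟩ := witness_builder σ hσinj y hy
    have hfeas : feasible d m k W := ⟨hWo, hWk⟩
    have htrWAm : (Wᵀ * Am * W).trace = ∑ a, Am (σ a) (σ a) := by
      rw [hWtr Am]
      have : (∑ c, ∑ a, ∑ b, y c a * (Am (σ a) (σ b) * y c b)) = C.trace := hytr
      rw [this]
      simp [Matrix.trace, Matrix.diag, hC]
    have hAmtr : (∑ i, Am i i) = SM := by
      rw [← htraceAm]; rfl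
    calc (k : ℝ) * SM = (k : ℝ) * ∑ i, Am i i := by rw [hAmtr]
      _ ≤ (d : ℝ) * ∑ a, Am (σ a) (σ a) := hσsum
      _ = (d : ℝ) * (Wᵀ * Am * W).trace := by rw [htrWAm]
      _ ≤ (d : ℝ) * OPT := by
          have h1 := hdom W
          have h2 := hWsmax W hfeas
          have hd : (0:ℝ) ≤ d := Nat.cast_nonneg d
          nlinarith
  -- the error term
  set T := ∑ i ∈ Finset.univ.filter (fun i : Fin d => ¬ (i : ℕ) < m), μ i * sfun Ws i
    with hT
  have hOPTsplit : OPT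
      = (∑ i ∈ Finset.univ.filter (fun i : Fin d => (i : ℕ) < m), μ i * sfun Ws i) + T := by
    rw [hOPT, htrA]
    exact (Finset.sum_filter_add_sum_filter_not Finset.univ _ _).symm
  have hrd : A.rank ≤ d := by
    have := A.rank_le_card_width
    simpa using this
  -- the key bound : T ≤ SN
  have hTS : T ≤ SN := by
    have hfilter1 : ∀ b : ℕ, (Finset.univ.filter (fun i : Fin d => ¬ (i : ℕ) < m)).filter
        (fun i : Fin d => (i : ℕ) < b)
        = Finset.univ.filter (fun i : Fin d => m ≤ (i : ℕ) ∧ (i : ℕ) < b) := by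
      intro b
      rw [Finset.filter_filter]
      exact Finset.filter_congr fun i _ => by constructor <;> intro h <;> omega
    rcases le_or_gt A.rank (2 * m) with hcase | hcase
    · -- r = A.rank
      have hrr : r = A.rank := by rw [hr]; exact min_eq_left hcase
      rw [hT, ← Finset.sum_filter_add_sum_filter_not
        (Finset.univ.filter (fun i : Fin d => ¬ (i : ℕ) < m))
        (fun i : Fin d => (i : ℕ) < r) (fun i => μ i * sfun Ws i)]
      have hz : ∑ i ∈ (Finset.univ.filter (fun i : Fin d => ¬ (i : ℕ) < m)).filter
          (fun i : Fin d => ¬ (i : ℕ) < r), μ i * sfun Ws i = 0 := by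
        apply Finset.sum_eq_zero
        intro i hi
        simp only [Finset.mem_filter] at hi
        have : μ i = 0 := hμ0 i (by omega)
        rw [this, zero_mul]
      rw [hfilter1 r, hz, add_zero]
      refine Finset.sum_le_sum fun i _ => ?_
      exact mul_le_of_le_one_right (hμnn i) (s_le_one Ws hWso (u i) (huu i))
    · -- r = 2 * m
      have hrr : r = 2 * m := by rw [hr]; exact min_eq_right (le_of_lt hcase)
      have h2md : 2 * m < d := by omega
      set t : Fin d := ⟨2 * m, h2md⟩ with ht
      have hbudget : (∑ i, sfun Ws i) = (m : ℝ) := s_total u hu Ws hWso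
      set F1 := Finset.univ.filter (fun i : Fin d => m ≤ (i : ℕ) ∧ (i : ℕ) < 2 * m) with hF1
      set F2 := Finset.univ.filter (fun i : Fin d => ¬ (i : ℕ) < 2 * m) with hF2
      have hsplitT : T = (∑ i ∈ F1, μ i * sfun Ws i) + ∑ i ∈ F2, μ i * sfun Ws i := by
        rw [hT, ← Finset.sum_filter_add_sum_filter_not
          (Finset.univ.filter (fun i : Fin d => ¬ (i : ℕ) < m))
          (fun i : Fin d => (i : ℕ) < 2 * m) (fun i => μ i * sfun Ws i), hfilter1 (2 * m)]
        congr 1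
        rw [Finset.filter_filter]
        exact Finset.sum_congr
          (Finset.filter_congr fun i _ => by constructor <;> intro h <;> omega)
          (fun _ _ => rfl)
      have hcardF1 : (F1.card : ℝ) = (m : ℝ) := by
        rw [hF1, filter_eq_map (by omega : m ≤ 2 * m) (le_of_lt h2md), Finset.card_map,
          Finset.card_univ, Fintype.card_fin]
        norm_cast
        omega
      have hsumsplit : (∑ i ∈ Finset.univ.filter (fun i : Fin d => (i:ℕ) < m), sfun Ws i)
          + ((∑ i ∈ F1, sfun Ws i) + ∑ i ∈ F2, sfun Ws i) = (m : ℝ) := by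
        rw [← hbudget, ← Finset.sum_filter_add_sum_filter_not Finset.univ
          (fun i : Fin d => (i : ℕ) < m) (sfun Ws)]
        congr 1
        rw [← Finset.sum_filter_add_sum_filter_not
          (Finset.univ.filter (fun i : Fin d => ¬ (i : ℕ) < m))
          (fun i : Fin d => (i : ℕ) < 2 * m) (sfun Ws), hfilter1 (2 * m)]
        congr 1
        rw [Finset.filter_filter]
        exact Finset.sum_congr
          (Finset.filter_congr fun i _ => by constructor <;> intro h <;> omega)
          (fun _ _ => rfl)
      have hF2bound : (∑ i ∈ F2, μ i * sfun Ws i) ≤ μ t * ∑ i ∈ F2, sfun Ws i := by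
        rw [Finset.mul_sum]
        refine Finset.sum_le_sum fun i hi => ?_
        have hti : t ≤ i := by
          simp only [hF2, Finset.mem_filter] at hi
          rw [Fin.le_def]
          show 2 * m ≤ (i : ℕ)
          omega
        exact mul_le_mul_of_nonneg_right (hμ hti) (hsnn Ws i)
      have hF2s : (∑ i ∈ F2, sfun Ws i) ≤ (m : ℝ) - ∑ i ∈ F1, sfun Ws i := by
        have h1 : 0 ≤ ∑ i ∈ Finset.univ.filter (fun i : Fin d => (i:ℕ) < m), sfun Ws i :=
          Finset.sum_nonneg fun i _ => hsnn Ws i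
        linarith
      have hstep : μ t * ∑ i ∈ F2, sfun Ws i ≤ ∑ i ∈ F1, μ i * (1 - sfun Ws i) := by
        calc μ t * ∑ i ∈ F2, sfun Ws i ≤ μ t * ((m : ℝ) - ∑ i ∈ F1, sfun Ws i) :=
              mul_le_mul_of_nonneg_left hF2s (hμnn t)
          _ = ∑ i ∈ F1, μ t * (1 - sfun Ws i) := by
              rw [← Finset.mul_sum]
              congr 1
              rw [Finset.sum_sub_distrib, Finset.sum_const, nsmul_eq_mul, ← hcardF1,
                mul_one]
          _ ≤ ∑ i ∈ F1, μ i * (1 - sfun Ws i) := by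
              refine Finset.sum_le_sum fun i hi => ?_
              have hit : i ≤ t := by
                simp only [hF1, Finset.mem_filter] at hi
                rw [Fin.le_def]
                show (i : ℕ) ≤ 2 * m
                omega
              have h1s : 0 ≤ 1 - sfun Ws i := by
                have := s_le_one Ws hWso (u i) (huu i)
                linarith
              exact mul_le_mul_of_nonneg_right (hμ hit) h1s
      have hSNF1 : SN = ∑ i ∈ F1, μ i := by rw [hSN, hrr, hF1]
      calc T = (∑ i ∈ F1, μ i * sfun Ws i) + ∑ i ∈ F2, μ i * sfun Ws i := hsplitT
        _ ≤ (∑ i ∈ F1, μ i * sfun Ws i) + ∑ i ∈ F1, μ i * (1 - sfun Ws i) := by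
            have := le_trans hF2bound hstep
            linarith
        _ = ∑ i ∈ F1, μ i := by
            rw [← Finset.sum_add_distrib]
            exact Finset.sum_congr rfl fun i _ => by ring
        _ = SN := hSNF1.symm
  -- final assembly
  have hOPTnn : 0 ≤ OPT := by
    rw [hOPT, htrA]
    exact Finset.sum_nonneg fun i _ => mul_nonneg (hμnn i) (hsnn Ws i)
  have hTe : T ≤ ε * OPT := by
    rw [hε]
    have hd0' : (0:ℝ) < d := by exact_mod_cast hd0
    rcases le_total ((d : ℝ) * G₁ / k) ((d : ℝ) * G₂ / m) with hc | hc
    · rw [min_eq_left hc, hG₁]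
      have hk0' : (0:ℝ) < k := by exact_mod_cast hk0
      exact le_trans hTS (div_bound hSNnn hSMpos hk0' hOPT1)
    · rw [min_eq_right hc, hG₂]
      have hm0' : (0:ℝ) < m := by exact_mod_cast hm
      exact le_trans hTS (div_bound hSNnn hTApos hm0' hOPT2)
  have hub : (Wmᵀ * A * Wm).trace ≤ OPT := hWsmax Wm hWm
  have hlow : OPT - T ≤ (Wmᵀ * A * Wm).trace := by
    have h1 : (Wsᵀ * Am * Ws).trace ≤ (Wmᵀ * Am * Wm).trace := hWmmax Ws hWs
    have h2 : (Wmᵀ * Am * Wm).trace ≤ (Wmᵀ * A * Wm).trace := hdom Wm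
    have h3 : OPT - T = (Wsᵀ * Am * Ws).trace := by
      rw [htrAm]
      linarith [hOPTsplit]
    linarith
  refine ⟨?_, hub⟩
  calc (1 - ε) * OPT = OPT - ε * OPT := by ring
    _ ≤ OPT - T := by linarith
    _ ≤ (Wmᵀ * A * Wm).trace := hlow
end

section
/- Let d, m, k be positive integers with m ≤ k ≤ d and let A ∈ ℝ^{d×d} be symmetric positive semidefinite. Then the maximum of Tr(Wᵀ A W) over the FSPCA feasible set F(d,m,k) is at least (m/d) · Tr(A) = (m/d) · ∑_{i=1}^{d} λ_i(A). -/
open Matrix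

/-- for PSD `A`, the maximum of `Tr(Wᵀ A W)` over `F(d,m,k)` is at
least `(m/d)·Tr(A)` (and `Tr(A) = ∑ᵢ λᵢ(A)`): i.e. some feasible `W` attains at
least this value. -/
theorem fspca_max_ge_fraction_trace (d m k : ℕ) (hd : 0 < d) (hm : 0 < m)
    (hmk : m ≤ k) (hkd : k ≤ d)
    (A : Matrix (Fin d) (Fin d) ℝ) (hA : A.PosSemidef) :
    ∃ W : Matrix (Fin d) (Fin m) ℝ, feasible d m k W ∧
      (m : ℝ) / (d : ℝ) * A.trace ≤ (Wᵀ * A * W).trace := by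
  haveI : NeZero d := ⟨hd.ne'⟩
  have hmd : m ≤ d := hmk.trans hkd
  -- selection maps: for each shift s, pick coordinates s, s+1, ..., s+m-1 (mod d)
  set f : Fin d → Fin m → Fin d := fun s j => s + Fin.castLE hmd j with hf
  have hinj : ∀ s, Function.Injective (f s) := by
    intro s a b h
    exact Fin.castLE_injective hmd (add_left_cancel h)
  set Wf : Fin d → Matrix (Fin d) (Fin m) ℝ :=
    fun s => Matrix.of fun i j => if f s j = i then 1 else 0 with hWf
  -- each Wf s is feasible
  have hfeas : ∀ s, feasible d m k (Wf s) := by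
    intro s
    constructor
    · ext j₁ j₂
      simp only [Matrix.mul_apply, Matrix.transpose_apply, Wf, Matrix.of_apply,
        ite_mul, one_mul, zero_mul]
      rw [Finset.sum_ite_eq Finset.univ (f s j₁)]
      simp only [Finset.mem_univ, if_true]
      by_cases h : j₁ = j₂
      · subst h; simp [Matrix.one_apply]
      · have : f s j₂ ≠ f s j₁ := fun hc => h ((hinj s hc).symm)
        simp [Matrix.one_apply, h, this]
    · have hsub : {i | Wf s i ≠ 0} ⊆ Set.range (f s) := by
        intro i hi
        by_contra hni
        apply hi
        funext j
        have : f s j ≠ i := fun hc => hni ⟨j, hc⟩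
        simp [Wf, this]
      calc {i | Wf s i ≠ 0}.ncard ≤ (Set.range (f s)).ncard :=
            Set.ncard_le_ncard hsub (Set.finite_range _)
        _ = m := by
            rw [← Set.image_univ, Set.ncard_image_of_injective _ (hinj s),
              Set.ncard_univ]
            simp
        _ ≤ k := hmk
  -- value of the objective at Wf s
  have hval : ∀ s, ((Wf s)ᵀ * A * Wf s).trace = ∑ j : Fin m, A (f s j) (f s j) := by
    intro s
    simp only [Matrix.trace, Matrix.diag, Matrix.mul_apply, Matrix.transpose_apply,
      Wf, Matrix.of_apply, ite_mul, one_mul, zero_mul, mul_ite, mul_one, mul_zero]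
    refine Finset.sum_congr rfl fun j _ => ?_
    simp [Finset.sum_ite_eq]
  -- sum over all shifts equals m · Tr(A)
  have hsum : ∑ s : Fin d, ((Wf s)ᵀ * A * Wf s).trace = (m : ℝ) * A.trace := by
    simp only [hval]
    rw [Finset.sum_comm]
    have : ∀ j : Fin m, ∑ s : Fin d, A (f s j) (f s j) = A.trace := by
      intro j
      rw [Matrix.trace]
      exact Fintype.sum_equiv (Equiv.addRight (Fin.castLE hmd j)) _ _ (fun s => rfl)
    simp [this, Matrix.trace]
  -- averaging: some shift attains at least the average
  have hdne : (d : ℝ) ≠ 0 := Nat.cast_ne_zero.mpr hd.ne'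
  have hle : ∑ _s : Fin d, ((m : ℝ) / d * A.trace) ≤
      ∑ s : Fin d, ((Wf s)ᵀ * A * Wf s).trace := by
    rw [hsum, Finset.sum_const, Finset.card_univ, Fintype.card_fin, nsmul_eq_mul]
    apply le_of_eq
    field_simp
  obtain ⟨s, -, hs⟩ := Finset.exists_le_of_sum_le ⟨(0 : Fin d), Finset.mem_univ _⟩ hle
  exact ⟨Wf s, hfeas s, hs⟩
end

section
/- Let d, m, k be positive integers with m ≤ k ≤ d and d ≥ 2m, let t > 1 and c > 0 be reals, and let A ∈ ℝ^{d×d} be symmetric positive semidefinite with λ_i(A) = c·i^{−t} for each i = 1, …, 2m. Let A_m be the best rank-m approximation of A, let W_m ∈ F(d,m,k) maximize Tr(Wᵀ A_m W) over F(d,m,k), and let W_* ∈ F(d,m,k) maximize Tr(Wᵀ A W) over F(d,m,k). If ε ∈ (0,1] and k ≥ d/(ε · m^{t−1}), then (1 − ε) · Tr(W_*ᵀ A W_*) ≤ Tr(W_mᵀ A W_m) ≤ Tr(W_*ᵀ A W_*). -/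
open Matrix

lemma aux_topk (d k : ℕ) (hk : k ≤ d) (f : Fin d → ℝ) (hf : ∀ i, 0 ≤ f i) :
    ∃ S : Finset (Fin d), S.card = k ∧ (k : ℝ) * ∑ i, f i ≤ (d : ℝ) * ∑ i ∈ S, f i := by
  have hne : (Finset.powersetCard k (Finset.univ : Finset (Fin d))).Nonempty := by
    rw [Finset.powersetCard_nonempty]
    simpa using hk
  obtain ⟨S, hS, hmax⟩ := Finset.exists_max_image _ (fun S => ∑ i ∈ S, f i) hne
  obtain ⟨-, hScard⟩ := Finset.mem_powersetCard.mp hS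
  refine ⟨S, hScard, ?_⟩
  have hswap : ∀ j ∉ S, ∀ i ∈ S, f j ≤ f i := by
    intro j hj i hi
    have hins : insert j (S.erase i) ∈ Finset.powersetCard k (Finset.univ : Finset (Fin d)) := by
      rw [Finset.mem_powersetCard]
      refine ⟨Finset.subset_univ _, ?_⟩
      rw [Finset.card_insert_of_notMem (by simp [hj]), Finset.card_erase_of_mem hi, hScard]
      have : 0 < k := hScard ▸ Finset.card_pos.mpr ⟨i, hi⟩
      omega
    have h1 := hmax _ hins
    rw [Finset.sum_insert (by simp [hj]), Finset.sum_erase_eq_sub hi] at h1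
    linarith
  -- each j ∉ S : k * f j ≤ ∑_{i∈S} f i
  have hout : ∀ j ∈ Finset.univ \ S, (k : ℝ) * f j ≤ ∑ i ∈ S, f i := by
    intro j hj
    rw [Finset.mem_sdiff] at hj
    calc (k : ℝ) * f j = ∑ _i ∈ S, f j := by rw [Finset.sum_const, hScard]; ring
    _ ≤ ∑ i ∈ S, f i := Finset.sum_le_sum fun i hi => hswap j hj.2 i hi
  have hsum : ∑ j ∈ Finset.univ \ S, (k : ℝ) * f j ≤ (d - k : ℝ) * ∑ i ∈ S, f i := by
    calc ∑ j ∈ Finset.univ \ S, (k : ℝ) * f j ≤ ∑ _j ∈ Finset.univ \ S, ∑ i ∈ S, f i :=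
          Finset.sum_le_sum hout
    _ = (d - k : ℝ) * ∑ i ∈ S, f i := by
        rw [Finset.sum_const, Finset.card_sdiff_of_subset (Finset.subset_univ S), hScard]
        rw [nsmul_eq_mul, Finset.card_univ, Fintype.card_fin, Nat.cast_sub hk]
  have hsplit : ∑ i, f i = ∑ i ∈ Finset.univ \ S, f i + ∑ i ∈ S, f i :=
    (Finset.sum_sdiff (Finset.subset_univ S)).symm
  have h2 : ∑ j ∈ Finset.univ \ S, (k : ℝ) * f j = (k : ℝ) * ∑ j ∈ Finset.univ \ S, f j := by
    rw [Finset.mul_sum]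
  have hks : (k : ℝ) ≤ d := by exact_mod_cast hk
  nlinarith [Finset.sum_nonneg (fun i (_ : i ∈ S) => hf i)]

lemma aux_extend (d m k : ℕ) (hm : 0 < m) (hmk : m ≤ k) (S : Finset (Fin d)) (hcard : S.card = k)
    (v : Fin d → ℝ) (hsupp : ∀ i, i ∉ S → v i = 0) (hnorm : ∑ i, v i ^ 2 = 1) :
    ∃ W : Matrix (Fin d) (Fin m) ℝ, Wᵀ * W = 1 ∧ (∀ i j, W i j ≠ 0 → i ∈ S) ∧
      (∀ i, W i ⟨0, hm⟩ = v i) := by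
  haveI : NeZero m := ⟨hm.ne'⟩
  have hk0 : 0 < k := lt_of_lt_of_le hm hmk
  haveI : NeZero k := ⟨hk0.ne'⟩
  let e : ↥S ≃ Fin k := S.equivFinOfCardEq hcard
  let v' : EuclideanSpace ℝ (Fin k) := WithLp.toLp 2 (fun a => v ((e.symm a : Fin d)))
  have hv'sum : ∑ a, v' a ^ 2 = 1 := by
    have h1 : ∑ a, v' a ^ 2 = ∑ x : ↥S, v (x : Fin d) ^ 2 :=
      Fintype.sum_equiv e.symm _ _ (fun a => rfl)
    have h2 : ∑ x : ↥S, v (x : Fin d) ^ 2 = ∑ i ∈ S, v i ^ 2 :=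
      Finset.sum_coe_sort S (fun i => v i ^ 2)
    have h3 : ∑ i ∈ S, v i ^ 2 = ∑ i, v i ^ 2 := by
      apply Finset.sum_subset (Finset.subset_univ S)
      intro i _ hi
      rw [hsupp i hi]; ring
    rw [h1, h2, h3, hnorm]
  have hv'norm : ‖v'‖ = 1 := by
    rw [EuclideanSpace.norm_eq]
    have : ∀ a, ‖v' a‖ ^ 2 = v' a ^ 2 := fun a => sq_abs _
    rw [show (∑ a, ‖v' a‖ ^ 2) = 1 by rw [Finset.sum_congr rfl fun a _ => this a, hv'sum]]
    exact Real.sqrt_one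
  let fam : Fin k → EuclideanSpace ℝ (Fin k) := fun _ => v'
  have hortho : Orthonormal ℝ (({0} : Set (Fin k)).restrict fam) := by
    constructor
    · rintro ⟨i, hi⟩; exact hv'norm
    · rintro ⟨i, hi⟩ ⟨j, hj⟩ hij
      exact absurd (Subtype.ext (hi.trans hj.symm)) hij
  have hcard' : Module.finrank ℝ (EuclideanSpace ℝ (Fin k)) = Fintype.card (Fin k) := by
    simp
  obtain ⟨b, hb⟩ := hortho.exists_orthonormalBasis_extension_of_card_eq hcard'
  have hb0 : b 0 = v' := hb 0 rfl
  set W : Matrix (Fin d) (Fin m) ℝ :=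
    Matrix.of (fun i j => if h : i ∈ S then b (Fin.castLE hmk j) (e ⟨i, h⟩) else 0) with hW
  refine ⟨W, ?_, ?_, ?_⟩
  · ext j j'
    rw [Matrix.mul_apply]
    have key : ∑ i : Fin d, Wᵀ j i * W i j'
        = ∑ a : Fin k, b (Fin.castLE hmk j) a * b (Fin.castLE hmk j') a := by
      rw [← Finset.sum_subset (Finset.subset_univ S)
        (fun i _ hi => by simp [hW, Matrix.transpose_apply, Matrix.of_apply, hi])]
      rw [← Finset.sum_coe_sort S (fun i => Wᵀ j i * W i j')]
      apply Fintype.sum_equiv e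
      rintro ⟨i, hi⟩
      simp [hW, Matrix.transpose_apply, Matrix.of_apply, hi]
    rw [key]
    have hbo := orthonormal_iff_ite.mp b.orthonormal (Fin.castLE hmk j) (Fin.castLE hmk j')
    simp only [PiLp.inner_apply, RCLike.inner_apply, starRingEnd_apply, star_trivial] at hbo
    rw [show (∑ a, (b (Fin.castLE hmk j)) a * (b (Fin.castLE hmk j')) a) = ∑ a, (b (Fin.castLE hmk j')) a * (b (Fin.castLE hmk j)) a from Finset.sum_congr rfl fun a _ => mul_comm _ _, hbo, Matrix.one_apply]
    congr 1
    simp [Fin.castLE_inj]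
  · intro i j hij
    by_contra h
    exact hij (by simp [hW, Matrix.of_apply, h])
  · intro i
    by_cases h : i ∈ S
    · simp only [hW, Matrix.of_apply, dif_pos h]
      have h0 : Fin.castLE hmk (⟨0, hm⟩ : Fin m) = 0 := by ext; rfl
      rw [h0, hb0]
      show v ((e.symm (e ⟨i, h⟩) : Fin d)) = v i
      rw [Equiv.symm_apply_apply]
    · simp only [hW, Matrix.of_apply, dif_neg h]
      exact (hsupp i h).symm

lemma aux_trace_quad {d m : ℕ} (u : Fin d → Fin d → ℝ) (μ : Fin d → ℝ) (T : Finset (Fin d))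
    (W : Matrix (Fin d) (Fin m) ℝ) :
    ((Wᵀ * (∑ i ∈ T, μ i • vecMulVec (u i) (u i)) * W)).trace
      = ∑ j : Fin m, ∑ i ∈ T, μ i * (∑ a, u i a * W a j) ^ 2 := by
  simp only [Matrix.trace, Matrix.diag_apply, Matrix.mul_apply, Matrix.sum_apply,
    Matrix.smul_apply, Matrix.vecMulVec_apply, smul_eq_mul, Matrix.transpose_apply,
    Finset.sum_mul, Finset.mul_sum]
  apply Finset.sum_congr rfl
  intro j _
  calc ∑ x : Fin d, ∑ y : Fin d, ∑ i ∈ T, W y j * (μ i * (u i y * u i x)) * W x j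
      = ∑ x : Fin d, ∑ i ∈ T, ∑ y : Fin d, W y j * (μ i * (u i y * u i x)) * W x j :=
        Finset.sum_congr rfl fun x _ => Finset.sum_comm
    _ = ∑ i ∈ T, ∑ x : Fin d, ∑ y : Fin d, W y j * (μ i * (u i y * u i x)) * W x j :=
        Finset.sum_comm
    _ = ∑ i ∈ T, μ i * (∑ a, u i a * W a j) ^ 2 := by
        apply Finset.sum_congr rfl
        intro i _
        rw [Finset.sum_comm, pow_two, Finset.sum_mul_sum, Finset.mul_sum]
        apply Finset.sum_congr rfl
        intro a _
        rw [Finset.mul_sum]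
        apply Finset.sum_congr rfl
        intro b _
        ring

lemma aux_parseval {d m : ℕ} (u : Fin d → Fin d → ℝ)
    (hu : ∀ i j : Fin d, u i ⬝ᵥ u j = if i = j then 1 else 0)
    (W : Matrix (Fin d) (Fin m) ℝ) (hW : Wᵀ * W = 1) (j : Fin m) :
    ∑ i : Fin d, (∑ a, u i a * W a j) ^ 2 = 1 := by
  let U : Matrix (Fin d) (Fin d) ℝ := Matrix.of u
  have hU : U * Uᵀ = 1 := by
    ext i j'
    simpa [U, Matrix.mul_apply, Matrix.one_apply, dotProduct] using hu i j'
  have hU' : Uᵀ * U = 1 := mul_eq_one_comm.mp hU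
  have key : ((U * W)ᵀ * (U * W)) = 1 := by
    rw [Matrix.transpose_mul, Matrix.mul_assoc, ← Matrix.mul_assoc Uᵀ U W, hU',
      Matrix.one_mul, hW]
  have h2 : ((U * W)ᵀ * (U * W)) j j = 1 := by rw [key]; simp [Matrix.one_apply]
  rw [Matrix.mul_apply] at h2
  rw [← h2]
  apply Finset.sum_congr rfl
  intro i _
  rw [pow_two, Matrix.transpose_apply, Matrix.mul_apply]
  rfl

lemma aux_vec_quad {d : ℕ} (u : Fin d → Fin d → ℝ) (μ : Fin d → ℝ) (x : Fin d → ℝ) :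
    x ⬝ᵥ ((∑ i : Fin d, μ i • vecMulVec (u i) (u i)) *ᵥ x)
      = ∑ i : Fin d, μ i * (∑ a, u i a * x a) ^ 2 := by
  simp only [dotProduct, Matrix.mulVec, dotProduct, Matrix.sum_apply, Matrix.smul_apply,
    Matrix.vecMulVec_apply, smul_eq_mul, Finset.sum_mul, Finset.mul_sum]
  calc ∑ a : Fin d, ∑ b : Fin d, ∑ i : Fin d, x a * ((μ i * (u i a * u i b)) * x b)
      = ∑ a : Fin d, ∑ i : Fin d, ∑ b : Fin d, x a * ((μ i * (u i a * u i b)) * x b) :=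
        Finset.sum_congr rfl fun a _ => Finset.sum_comm
    _ = ∑ i : Fin d, ∑ a : Fin d, ∑ b : Fin d, x a * ((μ i * (u i a * u i b)) * x b) :=
        Finset.sum_comm
    _ = ∑ i : Fin d, μ i * (∑ a, u i a * x a) ^ 2 := by
        apply Finset.sum_congr rfl
        intro i _
        rw [pow_two, Finset.sum_mul_sum, Finset.mul_sum]
        apply Finset.sum_congr rfl
        intro a _
        rw [Finset.mul_sum]
        apply Finset.sum_congr rfl
        intro b _
        ring

/-- Zipf-like spectrum: given a spectral decomposition
`A = ∑ᵢ μᵢ uᵢ uᵢᵀ` (orthonormal `u`, non-increasing `μ`, so `μᵢ = λᵢ(A)`) with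
`λᵢ(A) = c·i^{-t}` for `i = 1, …, 2m` (`t > 1`, `c > 0`), let `Am` be the best
rank-`m` approximation, `Wm` a maximizer of `Tr(Wᵀ Am W)` over `F(d,m,k)` and
`Ws` a maximizer of `Tr(Wᵀ A W)` over `F(d,m,k)`. If `ε ∈ (0,1]` and
`k ≥ d/(ε·m^{t-1})` then `(1-ε)·Tr(Wsᵀ A Ws) ≤ Tr(Wmᵀ A Wm) ≤ Tr(Wsᵀ A Ws)`. -/
theorem zipf_approximation_guarantee (d m k : ℕ) (hm : 0 < m) (hmk : m ≤ k)
    (hkd : k ≤ d) (h2m : 2 * m ≤ d)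
    (t c : ℝ) (ht : 1 < t) (hc : 0 < c)
    (A : Matrix (Fin d) (Fin d) ℝ) (hA : A.PosSemidef)
    (u : Fin d → Fin d → ℝ) (μ : Fin d → ℝ)
    (hu : ∀ i j : Fin d, u i ⬝ᵥ u j = if i = j then 1 else 0)
    (hμ : Antitone μ)
    (hdec : A = ∑ i : Fin d, μ i • vecMulVec (u i) (u i))
    (hzipf : ∀ i : Fin d, (i : ℕ) < 2 * m → μ i = c * (((i : ℕ) + 1 : ℝ)) ^ (-t))
    (Am : Matrix (Fin d) (Fin d) ℝ)
    (hAm : Am = ∑ i ∈ Finset.univ.filter (fun i : Fin d => (i : ℕ) < m),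
      μ i • vecMulVec (u i) (u i))
    (Wm Ws : Matrix (Fin d) (Fin m) ℝ)
    (hWm : feasible d m k Wm) (hWs : feasible d m k Ws)
    (hWmmax : ∀ W : Matrix (Fin d) (Fin m) ℝ, feasible d m k W →
      (Wᵀ * Am * W).trace ≤ (Wmᵀ * Am * Wm).trace)
    (hWsmax : ∀ W : Matrix (Fin d) (Fin m) ℝ, feasible d m k W →
      (Wᵀ * A * W).trace ≤ (Wsᵀ * A * Ws).trace)
    (ε : ℝ) (hε0 : 0 < ε) (hε1 : ε ≤ 1)
    (hk : (d : ℝ) / (ε * (m : ℝ) ^ (t - 1)) ≤ (k : ℝ)) :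
    (1 - ε) * (Wsᵀ * A * Ws).trace ≤ (Wmᵀ * A * Wm).trace ∧
      (Wmᵀ * A * Wm).trace ≤ (Wsᵀ * A * Ws).trace := by
  have hk0 : 0 < k := lt_of_lt_of_le hm hmk
  have hd : 0 < d := lt_of_lt_of_le hk0 hkd
  have hmd : m < d := by omega
  have hdR : (0:ℝ) < d := by exact_mod_cast hd
  have hmR : (0:ℝ) < m := by exact_mod_cast hm
  have hkR : (0:ℝ) < k := by exact_mod_cast hk0
  set mI : Fin d := ⟨m, hmd⟩ with hmI
  set i0 : Fin d := ⟨0, hd⟩ with hi0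
  -- eigenvalues are nonnegative
  have hμnn : ∀ j : Fin d, 0 ≤ μ j := by
    intro j
    have h1 := hA.dotProduct_mulVec_nonneg (u j)
    have h2 : u j ⬝ᵥ (A *ᵥ u j) = μ j := by
      rw [hdec, aux_vec_quad]
      have heach : ∀ i : Fin d, μ i * (∑ a, u i a * u j a) ^ 2
          = if i = j then μ j else 0 := by
        intro i
        have hij := hu i j
        rw [dotProduct] at hij
        rw [hij]
        by_cases h : i = j <;> simp [h]
      rw [Finset.sum_congr rfl fun i _ => heach i, Finset.sum_ite_eq' Finset.univ j]
      simp
    simpa [h2] using h1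
  -- split A = Am + R
  set R : Matrix (Fin d) (Fin d) ℝ :=
    ∑ i ∈ Finset.univ.filter (fun i : Fin d => ¬ (i : ℕ) < m), μ i • vecMulVec (u i) (u i)
    with hR
  have hsplit : A = Am + R := by
    rw [hdec, hAm, hR, Finset.sum_filter_add_sum_filter_not]
  have htr : ∀ W : Matrix (Fin d) (Fin m) ℝ,
      (Wᵀ * A * W).trace = (Wᵀ * Am * W).trace + (Wᵀ * R * W).trace := by
    intro W
    rw [hsplit, Matrix.mul_add, Matrix.add_mul, Matrix.trace_add]
  -- R-trace bounds
  have hRnn : ∀ W : Matrix (Fin d) (Fin m) ℝ, 0 ≤ (Wᵀ * R * W).trace := by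
    intro W
    rw [hR, aux_trace_quad]
    apply Finset.sum_nonneg
    intro j _
    apply Finset.sum_nonneg
    intro i _
    exact mul_nonneg (hμnn i) (sq_nonneg _)
  have hμmI : μ mI = c * ((m : ℝ) + 1) ^ (-t) := by
    have := hzipf mI (by simp [hmI]; omega)
    simpa [hmI] using this
  have hμmInn : 0 ≤ μ mI := hμnn mI
  have hRub : ∀ W : Matrix (Fin d) (Fin m) ℝ, Wᵀ * W = 1 →
      (Wᵀ * R * W).trace ≤ (m : ℝ) * μ mI := by
    intro W hWo
    rw [hR, aux_trace_quad]
    calc ∑ j : Fin m, ∑ i ∈ Finset.univ.filter (fun i : Fin d => ¬ (i : ℕ) < m),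
            μ i * (∑ a, u i a * W a j) ^ 2
        ≤ ∑ j : Fin m, ∑ i ∈ Finset.univ.filter (fun i : Fin d => ¬ (i : ℕ) < m),
            μ mI * (∑ a, u i a * W a j) ^ 2 := by
          apply Finset.sum_le_sum
          intro j _
          apply Finset.sum_le_sum
          intro i hi
          rw [Finset.mem_filter] at hi
          have hle : mI ≤ i := Fin.le_def.mpr (by simp [hmI]; omega)
          exact mul_le_mul_of_nonneg_right (hμ hle) (sq_nonneg _)
      _ ≤ ∑ j : Fin m, ∑ i : Fin d, μ mI * (∑ a, u i a * W a j) ^ 2 := by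
          apply Finset.sum_le_sum
          intro j _
          apply Finset.sum_le_sum_of_subset_of_nonneg (Finset.filter_subset _ _)
          intro i _ _
          exact mul_nonneg hμmInn (sq_nonneg _)
      _ = ∑ j : Fin m, μ mI * 1 := by
          apply Finset.sum_congr rfl
          intro j _
          rw [← Finset.mul_sum, aux_parseval u hu W hWo j]
      _ = (m : ℝ) * μ mI := by simp [mul_comm]
  -- construct a good feasible W
  have hone : ∑ i, (u i0 i) ^ 2 = 1 := by
    have h := hu i0 i0
    rw [dotProduct] at h
    simp at h
    rw [← h]
    exact Finset.sum_congr rfl fun a _ => (pow_two _)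
  obtain ⟨S, hScard, hSge⟩ := aux_topk d k hkd (fun i => (u i0 i) ^ 2) (fun i => sq_nonneg _)
  rw [hone, mul_one] at hSge
  set r2 : ℝ := ∑ i ∈ S, (u i0 i) ^ 2 with hr2
  have hr2pos : 0 < r2 := by nlinarith
  set s : ℝ := Real.sqrt r2 with hs
  have hspos : 0 < s := Real.sqrt_pos.mpr hr2pos
  have hs2 : s ^ 2 = r2 := Real.sq_sqrt hr2pos.le
  set v : Fin d → ℝ := fun i => (if i ∈ S then u i0 i else 0) / s with hv
  have hsupp : ∀ i, i ∉ S → v i = 0 := by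
    intro i hi
    simp [hv, if_neg hi]
  have hnorm : ∑ i, v i ^ 2 = 1 := by
    have h1 : ∀ i : Fin d, v i ^ 2 = (if i ∈ S then (u i0 i) ^ 2 else 0) / r2 := by
      intro i
      by_cases h : i ∈ S <;> simp [hv, h, div_pow, hs2]
    rw [Finset.sum_congr rfl fun i _ => h1 i, ← Finset.sum_div,
      Finset.sum_ite_mem, Finset.univ_inter, ← hr2, div_self hr2pos.ne']
  obtain ⟨W0, hW0orth, hW0supp, hW0col⟩ := aux_extend d m k hm hmk S hScard v hsupp hnorm
  have hW0feas : feasible d m k W0 := by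
    refine ⟨hW0orth, ?_⟩
    have hsub : {i | W0 i ≠ 0} ⊆ (S : Set (Fin d)) := by
      intro i hi
      obtain ⟨j, hj⟩ := Function.ne_iff.mp hi
      exact hW0supp i j hj
    calc {i | W0 i ≠ 0}.ncard ≤ (S : Set (Fin d)).ncard :=
          Set.ncard_le_ncard hsub (S.finite_toSet)
      _ = k := by rw [Set.ncard_coe_finset, hScard]
  -- lower bound on the trace at W0
  have hμi0 : μ i0 = c := by
    have := hzipf i0 (by simp [hi0]; omega)
    simp only [hi0] at this
    norm_num at this
    simpa [Real.one_rpow] using this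
  have hW0tr : c * ((k : ℝ) / d) ≤ (W0ᵀ * A * W0).trace := by
    rw [hdec, aux_trace_quad]
    have hdp : ∑ a, u i0 a * W0 a ⟨0, hm⟩ = s := by
      rw [Finset.sum_congr rfl fun a _ => by rw [hW0col a]]
      have heach : ∀ a : Fin d, u i0 a * v a = (if a ∈ S then (u i0 a) ^ 2 else 0) / s := by
        intro a
        by_cases h : a ∈ S <;> simp [hv, h, pow_two] <;> ring
      rw [Finset.sum_congr rfl fun a _ => heach a, ← Finset.sum_div,
        Finset.sum_ite_mem, Finset.univ_inter, ← hr2, ← hs2]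
      field_simp
    have hterm : c * r2 ≤ ∑ i : Fin d, μ i * (∑ a, u i a * W0 a ⟨0, hm⟩) ^ 2 := by
      have h1 : μ i0 * (∑ a, u i0 a * W0 a ⟨0, hm⟩) ^ 2 = c * r2 := by
        rw [hdp, hs2, hμi0]
      rw [← h1]
      exact Finset.single_le_sum (f := fun i => μ i * (∑ a, u i a * W0 a ⟨0, hm⟩) ^ 2)
        (fun i _ => mul_nonneg (hμnn i) (sq_nonneg _)) (Finset.mem_univ i0)
    calc c * ((k : ℝ) / d) ≤ c * r2 := by
          apply mul_le_mul_of_nonneg_left _ hc.le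
          rw [div_le_iff₀ hdR]
          linarith
      _ ≤ ∑ i : Fin d, μ i * (∑ a, u i a * W0 a ⟨0, hm⟩) ^ 2 := hterm
      _ ≤ ∑ j : Fin m, ∑ i : Fin d, μ i * (∑ a, u i a * W0 a j) ^ 2 :=
          Finset.single_le_sum
            (f := fun j => ∑ i : Fin d, μ i * (∑ a, u i a * W0 a j) ^ 2)
            (fun j _ => Finset.sum_nonneg fun i _ => mul_nonneg (hμnn i) (sq_nonneg _))
            (Finset.mem_univ (⟨0, hm⟩ : Fin m))
  have hTs : c * ((k : ℝ) / d) ≤ (Wsᵀ * A * Ws).trace :=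
    le_trans hW0tr (hWsmax W0 hW0feas)
  -- numeric bound: m * μ mI ≤ ε * (c * k / d)
  have hmt : (0:ℝ) < (m : ℝ) ^ (t - 1) := Real.rpow_pos_of_pos hmR _
  have hnum : (m : ℝ) * μ mI ≤ ε * (c * ((k : ℝ) / d)) := by
    rw [hμmI]
    have h1 : ((m : ℝ) + 1) ^ (-t) ≤ (m : ℝ) ^ (-t) :=
      Real.rpow_le_rpow_of_nonpos hmR (by linarith) (by linarith)
    have h2 : (m : ℝ) * (m : ℝ) ^ (-t) = ((m : ℝ) ^ (t - 1))⁻¹ := by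
      rw [show ((m : ℝ) ^ (t - 1))⁻¹ = (m : ℝ) ^ (-(t-1)) by
        rw [Real.rpow_neg hmR.le]]
      rw [show (-(t-1)) = 1 + (-t) by ring, Real.rpow_add hmR, Real.rpow_one]
    have h3 : (1:ℝ) ≤ ε * ((k : ℝ) / d) * ((m : ℝ) ^ (t - 1)) := by
      have hd2 : (d : ℝ) ≤ k * (ε * (m : ℝ) ^ (t - 1)) :=
        (div_le_iff₀ (mul_pos hε0 hmt)).mp hk
      rw [show ε * ((k : ℝ) / d) * ((m : ℝ) ^ (t - 1))
          = (k * (ε * (m : ℝ) ^ (t - 1))) / d by ring]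
      rw [le_div_iff₀ hdR, one_mul]
      exact hd2
    calc (m : ℝ) * (c * ((m : ℝ) + 1) ^ (-t)) ≤ (m : ℝ) * (c * (m : ℝ) ^ (-t)) := by
          apply mul_le_mul_of_nonneg_left _ hmR.le
          exact mul_le_mul_of_nonneg_left h1 hc.le
      _ = c * ((m : ℝ) ^ (t - 1))⁻¹ := by rw [← h2]; ring
      _ ≤ c * ((m : ℝ) ^ (t - 1))⁻¹ * (ε * ((k : ℝ) / d) * ((m : ℝ) ^ (t - 1))) := by
          apply le_mul_of_one_le_right _ h3
          positivity
      _ = ε * (c * ((k : ℝ) / d)) * (((m : ℝ) ^ (t - 1))⁻¹ * ((m : ℝ) ^ (t - 1))) := by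
          ring
      _ = ε * (c * ((k : ℝ) / d)) := by rw [inv_mul_cancel₀ hmt.ne', mul_one]
  have hRWs : (Wsᵀ * R * Ws).trace ≤ ε * (Wsᵀ * A * Ws).trace :=
    calc (Wsᵀ * R * Ws).trace ≤ (m : ℝ) * μ mI := hRub Ws hWs.1
      _ ≤ ε * (c * ((k : ℝ) / d)) := hnum
      _ ≤ ε * (Wsᵀ * A * Ws).trace := mul_le_mul_of_nonneg_left hTs hε0.le
  constructor
  · have e1 := htr Wm
    have e2 := htr Ws
    have h4 : (Wsᵀ * Am * Ws).trace ≤ (Wmᵀ * Am * Wm).trace := hWmmax Ws hWs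
    have h5 := hRnn Wm
    linarith
  · exact hWsmax Wm hWm
end

section
/- Let t > 1 be a real number and let m, m' be positive integers with m ≤ m'. Then (∑_{i=m'+1}^{2m'} i^{−t}) / (∑_{i=1}^{m'} i^{−t}) ≤ (∑_{i=m+1}^{2m} i^{−t}) / (∑_{i=1}^{m} i^{−t}); that is, the ratio (∑_{i=m+1}^{2m} i^{−t}) / (∑_{i=1}^{m} i^{−t}) is non-increasing in m. -/
open Finset

section aux
variable (t : ℝ)

private lemma fpos (ht : 1 < t) {i : ℕ} (hi : 0 < i) : 0 < (i : ℝ) ^ (-t) :=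
  Real.rpow_pos_of_pos (by exact_mod_cast hi) _

private lemma Spos (ht : 1 < t) {m : ℕ} (hm : 0 < m) :
    0 < ∑ i ∈ Ioc 0 m, (i : ℝ) ^ (-t) :=
  Finset.sum_pos (fun i hi => fpos t ht (mem_Ioc.mp hi).1)
    (by simp [Finset.nonempty_Ioc, hm])

private lemma double (m : ℕ) :
    ∑ i ∈ Ioc 0 (2 * m), (i : ℝ) ^ (-t)
      = ∑ i ∈ Ioc 0 m, (((2 * i - 1 : ℕ) : ℝ) ^ (-t) + ((2 * i : ℕ) : ℝ) ^ (-t)) := by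
  induction m with
  | zero => simp
  | succ n ih =>
    have h1 : 2 * (n + 1) = (2 * n + 1) + 1 := by ring
    rw [h1, Finset.sum_Ioc_succ_top (by omega), Finset.sum_Ioc_succ_top (by omega),
      ih, Finset.sum_Ioc_succ_top (by omega : 0 ≤ n)]
    have h2 : 2 * (n + 1) - 1 = 2 * n + 1 := by omega
    rw [h2]
    push_cast
    have h3 : (2 * (n:ℝ) + 1 + 1) = 2 * ((n:ℝ) + 1) := by ring
    rw [h3]
    ring

private lemma term (ht : 1 < t) {i m : ℕ} (hi : 0 < i) (him : i ≤ m) :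
    (((2 * m + 1 : ℕ) : ℝ) ^ (-t) + ((2 * m + 2 : ℕ) : ℝ) ^ (-t)) * ((i : ℝ) ^ (-t))
      ≤ ((m + 1 : ℕ) : ℝ) ^ (-t)
        * (((2 * i - 1 : ℕ) : ℝ) ^ (-t) + ((2 * i : ℕ) : ℝ) ^ (-t)) := by
  obtain ⟨j, rfl⟩ : ∃ j, i = j + 1 := ⟨i - 1, by omega⟩
  have hsub : 2 * (j + 1) - 1 = 2 * j + 1 := by omega
  rw [hsub]
  have ht0 : (-t) ≤ 0 := by linarith
  have h1 : ((2 * m + 1 : ℕ) : ℝ) ^ (-t) * ((j + 1 : ℕ) : ℝ) ^ (-t)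
      ≤ ((m + 1 : ℕ) : ℝ) ^ (-t) * ((2 * j + 1 : ℕ) : ℝ) ^ (-t) := by
    rw [← Real.mul_rpow (by positivity) (by positivity),
        ← Real.mul_rpow (by positivity) (by positivity)]
    apply Real.rpow_le_rpow_of_nonpos (by positivity) _ ht0
    have hjm : (j : ℝ) ≤ (m : ℝ) - 0 := by
      have : j + 1 ≤ m := him
      have := (Nat.cast_le (α := ℝ)).mpr this
      push_cast at this ⊢; linarith
    push_cast
    nlinarith [hjm]
  have h2 : ((2 * m + 2 : ℕ) : ℝ) ^ (-t) * ((j + 1 : ℕ) : ℝ) ^ (-t)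
      = ((m + 1 : ℕ) : ℝ) ^ (-t) * ((2 * (j + 1) : ℕ) : ℝ) ^ (-t) := by
    rw [← Real.mul_rpow (by positivity) (by positivity),
        ← Real.mul_rpow (by positivity) (by positivity)]
    congr 1
    push_cast; ring
  have p1 : (0:ℝ) < ((m + 1 : ℕ) : ℝ) ^ (-t) := fpos t ht (by omega)
  nlinarith [h1, h2]

private lemma key (ht : 1 < t) {m : ℕ} (hm : 0 < m) :
    (((2 * m + 1 : ℕ) : ℝ) ^ (-t) + ((2 * m + 2 : ℕ) : ℝ) ^ (-t))
        * (∑ i ∈ Ioc 0 m, (i : ℝ) ^ (-t))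
      ≤ ((m + 1 : ℕ) : ℝ) ^ (-t) * (∑ i ∈ Ioc 0 (2 * m), (i : ℝ) ^ (-t)) := by
  rw [double, Finset.mul_sum, Finset.mul_sum]
  exact Finset.sum_le_sum fun i hi =>
    term t ht (mem_Ioc.mp hi).1 (mem_Ioc.mp hi).2

private lemma Qstep (ht : 1 < t) {m : ℕ} (hm : 0 < m) :
    (∑ i ∈ Ioc 0 (2 * (m + 1)), (i : ℝ) ^ (-t)) / (∑ i ∈ Ioc 0 (m + 1), (i : ℝ) ^ (-t))
      ≤ (∑ i ∈ Ioc 0 (2 * m), (i : ℝ) ^ (-t)) / (∑ i ∈ Ioc 0 m, (i : ℝ) ^ (-t)) := by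
  have hS := Spos t ht hm
  have hS' := Spos t ht (Nat.succ_pos m)
  rw [div_le_div_iff₀ hS' hS]
  have e1 : (∑ i ∈ Ioc 0 (2 * (m + 1)), (i : ℝ) ^ (-t))
      = (∑ i ∈ Ioc 0 (2 * m), (i : ℝ) ^ (-t))
        + ((2 * m + 1 : ℕ) : ℝ) ^ (-t) + ((2 * m + 2 : ℕ) : ℝ) ^ (-t) := by
    have h1 : 2 * (m + 1) = (2 * m + 1) + 1 := by ring
    rw [h1, Finset.sum_Ioc_succ_top (by omega), Finset.sum_Ioc_succ_top (by omega)]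
  have e2 : (∑ i ∈ Ioc 0 (m + 1), (i : ℝ) ^ (-t))
      = (∑ i ∈ Ioc 0 m, (i : ℝ) ^ (-t)) + ((m + 1 : ℕ) : ℝ) ^ (-t) := by
    rw [Finset.sum_Ioc_succ_top (by omega)]
  have hk := key t ht hm
  rw [e1, e2]
  nlinarith [hk]
end aux

/-- for real `t > 1`, the ratio
`(∑_{i=m+1}^{2m} i^{-t}) / (∑_{i=1}^{m} i^{-t})` is non-increasing in the
positive integer `m`. -/
theorem zipf_ratio_antitone (t : ℝ) (ht : 1 < t) (m m' : ℕ) (hm : 0 < m)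
    (hmm' : m ≤ m') :
    (∑ i ∈ Finset.Icc (m' + 1) (2 * m'), (i : ℝ) ^ (-t)) /
        (∑ i ∈ Finset.Icc 1 m', (i : ℝ) ^ (-t)) ≤
      (∑ i ∈ Finset.Icc (m + 1) (2 * m), (i : ℝ) ^ (-t)) /
        (∑ i ∈ Finset.Icc 1 m, (i : ℝ) ^ (-t)) := by
  have conv : ∀ n : ℕ, 0 < n →
      (∑ i ∈ Finset.Icc (n + 1) (2 * n), (i : ℝ) ^ (-t)) /
          (∑ i ∈ Finset.Icc 1 n, (i : ℝ) ^ (-t))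
        = (∑ i ∈ Ioc 0 (2 * n), (i : ℝ) ^ (-t)) /
            (∑ i ∈ Ioc 0 n, (i : ℝ) ^ (-t)) - 1 := by
    intro n hn
    have hI1 : Finset.Icc 1 n = Ioc 0 n := by
      ext i; simp [Nat.lt_iff_add_one_le]
    have hI2 : Finset.Icc (n + 1) (2 * n) = Ioc n (2 * n) := by
      ext i; simp only [Finset.mem_Icc, Finset.mem_Ioc]; omega
    have hsplit : (∑ i ∈ Ioc 0 n, (i : ℝ) ^ (-t)) + (∑ i ∈ Ioc n (2 * n), (i : ℝ) ^ (-t))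
        = ∑ i ∈ Ioc 0 (2 * n), (i : ℝ) ^ (-t) :=
      Finset.sum_Ioc_consecutive _ (by omega) (by omega)
    have hS := Spos t ht hn
    rw [hI1, hI2]
    field_simp
    linarith [hsplit]
  rw [conv m hm, conv m' (lt_of_lt_of_le hm hmm')]
  have main : ∀ n : ℕ, m ≤ n →
      (∑ i ∈ Ioc 0 (2 * n), (i : ℝ) ^ (-t)) / (∑ i ∈ Ioc 0 n, (i : ℝ) ^ (-t))
        ≤ (∑ i ∈ Ioc 0 (2 * m), (i : ℝ) ^ (-t)) / (∑ i ∈ Ioc 0 m, (i : ℝ) ^ (-t)) := by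
    intro n hn
    induction n, hn using Nat.le_induction with
    | base => exact le_refl _
    | succ k hk ih => exact le_trans (Qstep t ht (lt_of_lt_of_le hm hk)) ih
  linarith [main m' hmm']
end
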